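/- arXiv:2401.08388 — 7 statements merged into one kernel-verified Lean document; each statement's English description precedes it below -/
import Mathlib

section
/- For each c ≥ 7, the finite sequence (e(c,b)) for b = 2, 3, ..., ⌈(c+1)/2⌉ is log concave: e(c,b)^2 ≥ e(c,b−1)·e(c,b+1) for all 2 < b < ⌈(c+1)/2⌉. -/
open Classical in
/-- The number `e(c,b)` of even continued fraction representations with
crossing number `c` and braid index `b`, given by its closed formula. -/
noncomputable def e (c b : ℕ) : ℕ :=
  if 3 ≤ c ∧ Odd c ∧ b = 2 then 2
  else if 3 ≤ c ∧ 3 ≤ b ∧ b ≤ (c + 2) / 2 then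
    2 ^ (b - 2) * Nat.choose (c - b) (b - 2)
  else 0

open Nat

lemma key_ineq (m e : ℕ) :
    (m+e+4).choose m * (m+e+2).choose (m+2) ≤ ((m+e+3).choose (m+1))^2 := by
  have hA : (m+e+4).choose m * m ! * (e+4)! = (m+e+4)! := by
    have h := Nat.choose_mul_factorial_mul_factorial (show m ≤ m+e+4 by omega)
    rwa [show m+e+4-m = e+4 by omega] at h
  have hB : (m+e+2).choose (m+2) * (m+2)! * e ! = (m+e+2)! := by
    have h := Nat.choose_mul_factorial_mul_factorial (show m+2 ≤ m+e+2 by omega)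
    rwa [show m+e+2-(m+2) = e by omega] at h
  have hM : (m+e+3).choose (m+1) * (m+1)! * (e+2)! = (m+e+3)! := by
    have h := Nat.choose_mul_factorial_mul_factorial (show m+1 ≤ m+e+3 by omega)
    rwa [show m+e+3-(m+1) = e+2 by omega] at h
  set A := (m+e+4).choose m with hAdef
  set B := (m+e+2).choose (m+2) with hBdef
  set M := (m+e+3).choose (m+1) with hMdef
  set P := (m+e+3)*(m+2)*(e+4)*(e+3) with hPdef
  set Q := (m+e+4)*(m+1)*(e+2)*(e+1) with hQdef
  set D := m ! * (e+4)! * ((m+2)! * e !) * ((m+1)! * (e+2)!)^2 with hDdef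
  have f1 : (m+e+4)! = (m+e+4) * (m+e+3)! := by
    rw [show m+e+4 = (m+e+3)+1 by omega]; exact Nat.factorial_succ _
  have f2 : (m+e+3)! = (m+e+3) * (m+e+2)! := by
    rw [show m+e+3 = (m+e+2)+1 by omega]; exact Nat.factorial_succ _
  have f3 : (m+2)! = (m+2) * (m+1)! := Nat.factorial_succ _
  have f4 : (m+1)! = (m+1) * m ! := Nat.factorial_succ _
  have f5 : (e+4)! = (e+4) * (e+3)! := Nat.factorial_succ _
  have f6 : (e+3)! = (e+3) * (e+2)! := Nat.factorial_succ _
  have f7 : (e+2)! = (e+2) * (e+1)! := Nat.factorial_succ _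
  have f8 : (e+1)! = (e+1) * e ! := Nat.factorial_succ _
  have bigEq : (A * B * P) * D = (M^2 * Q) * D := by
    have L : (A * B * P) * D
        = (A * m ! * (e+4)!) * (B * (m+2)! * e !) * P * ((m+1)! * (e+2)!)^2 := by
      ring
    have R : (M^2 * Q) * D
        = (M * (m+1)! * (e+2)!)^2 * Q * (m ! * (e+4)! * ((m+2)! * e !)) := by
      ring
    rw [L, R, hA, hB, hM, hPdef, hQdef, f1, f2, f3, f4, f5, f6, f7, f8]
    ring
  have hD : 0 < D := by positivity
  have hid : A * B * P = M^2 * Q :=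
    Nat.eq_of_mul_eq_mul_right hD bigEq
  have hQP : Q ≤ P := by
    rw [hPdef, hQdef]; nlinarith [sq_nonneg (m+e), sq_nonneg e, sq_nonneg m]
  have hP : 0 < P := by positivity
  have : A * B * P ≤ M^2 * P := by
    calc A * B * P = M^2 * Q := hid
    _ ≤ M^2 * P := Nat.mul_le_mul_left _ hQP
  exact Nat.le_of_mul_le_mul_right this hP

lemma e_mid (c b : ℕ) (h1 : 3 ≤ c) (h2 : 3 ≤ b) (h3 : b ≤ (c+2)/2) :
    e c b = 2 ^ (b - 2) * Nat.choose (c - b) (b - 2) := by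
  unfold e
  rw [if_neg (by rintro ⟨-, -, h⟩; omega), if_pos ⟨h1, h2, h3⟩]

theorem e_log_concave (c : ℕ) (hc : 7 ≤ c) (b : ℕ) (hb1 : 2 < b)
    (hb2 : b < (c + 2) / 2) :
    e c (b - 1) * e c (b + 1) ≤ (e c b) ^ 2 := by
  rcases eq_or_lt_of_le (show 3 ≤ b from hb1) with h3 | h4
  · -- b = 3
    have hb3 : b = 3 := h3.symm
    subst hb3
    have h4le : (4:ℕ) ≤ (c+2)/2 := hb2
    rw [e_mid c 3 (by omega) le_rfl (by omega),
        e_mid c 4 (by omega) (by omega) h4le]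
    show e c 2 * (2 ^ 2 * (c - 4).choose 2) ≤ (2 ^ 1 * (c - 3).choose 1) ^ 2
    rcases Nat.even_or_odd c with hev | hodd
    · have : e c 2 = 0 := by
        unfold e
        rw [if_neg (by rintro ⟨-, h, -⟩; exact (Nat.not_even_iff_odd.mpr h) hev),
            if_neg (by rintro ⟨-, h, -⟩; omega)]
      rw [this]; simp
    · have he2 : e c 2 = 2 := by
        unfold e
        rw [if_pos ⟨by omega, hodd, rfl⟩]
      rw [he2]
      obtain ⟨d, rfl⟩ : ∃ d, c = d + 7 := ⟨c - 7, by omega⟩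
      rw [show d + 7 - 4 = d + 3 by omega, show d + 7 - 3 = d + 4 by omega,
          Nat.choose_one_right]
      have hcc : 2 * ((d+3).choose 2) = (d+3)*(d+2) := by
        have h := Nat.choose_mul_factorial_mul_factorial (show 2 ≤ d+3 by omega)
        rw [show d+3-2 = d+1 by omega] at h
        have hf : (d+3)! = (d+3)*(d+2)*(d+1)! := by
          rw [show d+3 = (d+2)+1 by omega, Nat.factorial_succ,
              show d+2 = (d+1)+1 by omega, Nat.factorial_succ]
          ring
        rw [hf] at h
        have : (d+3).choose 2 * 2! * (d+1)! = ((d+3)*(d+2)) * (d+1)! := h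
        have h2 := Nat.eq_of_mul_eq_mul_right (Nat.factorial_pos (d+1)) this
        simp [Nat.factorial] at h2
        omega
      nlinarith [hcc, Nat.choose_pos (show 2 ≤ d+3 by omega)]
  · -- b ≥ 4
    have hc2b : 2*b ≤ c := by omega
    obtain ⟨m, rfl⟩ : ∃ m, b = m + 4 := ⟨b - 4, by omega⟩
    obtain ⟨e', rfl⟩ : ∃ e', c = 2*(m+4) + e' := ⟨c - 2*(m+4), by omega⟩
    have hh := hb2
    rw [e_mid _ (m+4-1) (by omega) (by omega) (by omega),
        e_mid _ (m+4+1) (by omega) (by omega) (by omega),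
        e_mid _ (m+4) (by omega) (by omega) (by omega)]
    rw [show m+4-1 = m+3 by omega, show m+3-2 = m+1 by omega,
        show 2*(m+4)+e' - (m+3) = (m+1)+e'+4 by omega,
        show m+4+1-2 = m+3 by omega,
        show 2*(m+4)+e' - (m+4+1) = (m+1)+e'+2 by omega,
        show m+4-2 = m+2 by omega,
        show 2*(m+4)+e' - (m+4) = (m+1)+e'+3 by omega]
    have hk := key_ineq (m+1) e'
    calc 2^(m+1) * ((m+1+e'+4).choose (m+1)) * (2^(m+3) * ((m+1+e'+2).choose (m+1+2)))
        = (2^(m+2))^2 * ((m+1+e'+4).choose (m+1) * (m+1+e'+2).choose (m+1+2)) := by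
          rw [show (2^(m+2))^2 = 2^(m+1) * 2^(m+3) by ring]; ring
      _ ≤ (2^(m+2))^2 * ((m+1+e'+3).choose ((m+1)+1))^2 := Nat.mul_le_mul_left _ hk
      _ = (2^(m+2) * ((m+1+e'+3).choose (m+2)))^2 := by ring_nf
end

section
/- For each c ≥ 7, the maximum of e(c,b) over 2 ≤ b ≤ ⌈(c+1)/2⌉ is attained at b = ⌈c/3⌉ + 1; that is, e(c, ⌈c/3⌉+1) ≥ e(c,b) for all b in that range. -/
def F (c k : ℕ) : ℕ := 2 ^ k * Nat.choose (c - (k + 2)) k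

lemma choose_id (m k : ℕ) :
    (k + 1) * (m + 1) * Nat.choose m (k + 1)
      = (m - k) * (m + 1 - k) * Nat.choose (m + 1) k := by
  calc (k + 1) * (m + 1) * Nat.choose m (k + 1)
      = (m + 1) * (Nat.choose m (k + 1) * (k + 1)) := by ring
    _ = (m + 1) * (Nat.choose m k * (m - k)) := by rw [Nat.choose_succ_right_eq]
    _ = (m - k) * (Nat.choose m k * (m + 1)) := by ring
    _ = (m - k) * (Nat.choose (m + 1) k * (m + 1 - k)) := by rw [Nat.choose_mul_succ_eq]
    _ = (m - k) * (m + 1 - k) * Nat.choose (m + 1) k := by ring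

lemma step_id (c k : ℕ) (h : k + 3 ≤ c) :
    (k + 1) * (c - k - 2) * F c (k + 1)
      = 2 * ((c - 2 * k - 3) * (c - 2 * k - 2)) * F c k := by
  obtain ⟨m, rfl⟩ : ∃ m, c = m + k + 3 := ⟨c - (k + 3), by omega⟩
  have e1 : m + k + 3 - (k + 1 + 2) = m := by omega
  have e2 : m + k + 3 - (k + 2) = m + 1 := by omega
  have e3 : m + k + 3 - k - 2 = m + 1 := by omega
  have e4 : m + k + 3 - 2 * k - 3 = m - k := by omega
  have e5 : m + k + 3 - 2 * k - 2 = m + 1 - k := by omega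
  unfold F
  rw [e1, e2, e3, e4, e5]
  have h := choose_id m k
  calc (k + 1) * (m + 1) * (2 ^ (k + 1) * Nat.choose m (k + 1))
      = 2 ^ k * 2 * ((k + 1) * (m + 1) * Nat.choose m (k + 1)) := by ring
    _ = 2 ^ k * 2 * ((m - k) * (m + 1 - k) * Nat.choose (m + 1) k) := by rw [h]
    _ = 2 * ((m - k) * (m + 1 - k)) * (2 ^ k * Nat.choose (m + 1) k) := by ring

lemma Finc (c k : ℕ) (hc : 3 * k + 4 ≤ c) : F c k ≤ F c (k + 1) := by
  have hid := step_id c k (by omega)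
  have hP : 0 < (k + 1) * (c - k - 2) := by
    have : 0 < c - k - 2 := by omega
    positivity
  have hPQ : (k + 1) * (c - k - 2) ≤ 2 * ((c - 2 * k - 3) * (c - 2 * k - 2)) := by
    obtain ⟨t, rfl⟩ : ∃ t, c = 3 * k + 4 + t := ⟨c - (3 * k + 4), by omega⟩
    have e1 : 3 * k + 4 + t - k - 2 = 2 * k + 2 + t := by omega
    have e2 : 3 * k + 4 + t - 2 * k - 3 = k + 1 + t := by omega
    have e3 : 3 * k + 4 + t - 2 * k - 2 = k + 2 + t := by omega
    rw [e1, e2, e3]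
    nlinarith
  have key : (k + 1) * (c - k - 2) * F c k ≤ (k + 1) * (c - k - 2) * F c (k + 1) := by
    rw [hid]
    exact Nat.mul_le_mul_right _ hPQ
  exact Nat.le_of_mul_le_mul_left key hP

lemma Fdec (c k : ℕ) (hc : c ≤ 3 * k + 3) : F c (k + 1) ≤ F c k := by
  rcases le_or_gt c (2 * k + 3) with h | h
  · have hz : Nat.choose (c - (k + 1 + 2)) (k + 1) = 0 :=
      Nat.choose_eq_zero_of_lt (by omega)
    unfold F
    rw [hz]
    simp
  · have hid := step_id c k (by omega)
    have hQ : 0 < 2 * ((c - 2 * k - 3) * (c - 2 * k - 2)) := by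
      have h1 : 0 < c - 2 * k - 3 := by omega
      have h2 : 0 < c - 2 * k - 2 := by omega
      positivity
    have hQP : 2 * ((c - 2 * k - 3) * (c - 2 * k - 2)) ≤ (k + 1) * (c - k - 2) := by
      obtain ⟨s, rfl⟩ : ∃ s, c = 2 * k + 4 + s := ⟨c - (2 * k + 4), by omega⟩
      obtain ⟨u, rfl⟩ : ∃ u, k = s + 1 + u := ⟨k - (s + 1), by omega⟩
      have e1 : 2 * (s + 1 + u) + 4 + s - 2 * (s + 1 + u) - 3 = s + 1 := by omega
      have e2 : 2 * (s + 1 + u) + 4 + s - 2 * (s + 1 + u) - 2 = s + 2 := by omega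
      have e3 : 2 * (s + 1 + u) + 4 + s - (s + 1 + u) - 2 = 2 * s + u + 3 := by omega
      rw [e1, e2, e3]
      nlinarith
    have key : 2 * ((c - 2 * k - 3) * (c - 2 * k - 2)) * F c (k + 1)
        ≤ 2 * ((c - 2 * k - 3) * (c - 2 * k - 2)) * F c k := by
      rw [← hid]
      exact Nat.mul_le_mul_right _ hQP
    exact Nat.le_of_mul_le_mul_left key hQ

lemma F_mono (c k1 : ℕ) : ∀ k2, k1 ≤ k2 → 3 * k2 + 1 ≤ c → F c k1 ≤ F c k2 := by
  intro k2
  induction k2 with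
  | zero =>
      intro h _
      have hk : k1 = 0 := by omega
      subst hk
      exact le_refl _
  | succ n ih =>
      intro h hcn
      rcases Nat.lt_or_ge k1 (n + 1) with h' | h'
      · exact le_trans (ih (by omega) (by omega)) (Finc c n (by omega))
      · have hk : k1 = n + 1 := by omega
        subst hk
        exact le_refl _

lemma F_anti (c k0 : ℕ) (h0 : c ≤ 3 * k0 + 3) :
    ∀ k2, k0 ≤ k2 → F c k2 ≤ F c k0 := by
  intro k2
  induction k2 with
  | zero =>
      intro h
      have hk : k0 = 0 := by omega
      subst hk
      exact le_refl _
  | succ n ih =>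
      intro h
      rcases Nat.lt_or_ge k0 (n + 1) with h' | h'
      · exact le_trans (Fdec c n (by omega)) (ih (by omega))
      · have hk : k0 = n + 1 := by omega
        rw [hk]

lemma e_eq_F (c b : ℕ) (hc : 3 ≤ c) (hb : 3 ≤ b) (hb2 : b ≤ (c + 2) / 2) :
    e c b = F c (b - 2) := by
  have h1 : ¬ (3 ≤ c ∧ Odd c ∧ b = 2) := by
    rintro ⟨-, -, rfl⟩; omega
  have h2 : 3 ≤ c ∧ 3 ≤ b ∧ b ≤ (c + 2) / 2 := ⟨hc, hb, hb2⟩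
  rw [e, if_neg h1, if_pos h2]
  unfold F
  have hb' : b - 2 + 2 = b := by omega
  rw [hb']

theorem e_mode (c : ℕ) (hc : 7 ≤ c) (b : ℕ) (hb1 : 2 ≤ b)
    (hb2 : b ≤ (c + 2) / 2) :
    e c b ≤ e c ((c + 2) / 3 + 1) := by
  set b0 := (c + 2) / 3 + 1 with hb0
  have hb0_ge : 4 ≤ b0 := by omega
  have hb0_le : b0 ≤ (c + 2) / 2 := by omega
  have he0 : e c b0 = F c (b0 - 2) := e_eq_F c b0 (by omega) (by omega) hb0_le
  have hk0c1 : 3 * (b0 - 2) + 1 ≤ c := by omega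
  have hk0c2 : c ≤ 3 * (b0 - 2) + 3 := by omega
  rcases eq_or_lt_of_le hb1 with hb | hb
  · -- b = 2
    have hb' : b = 2 := hb.symm
    have h2 : e c b ≤ 2 := by
      rw [hb', e]
      split
      · exact le_refl 2
      · split
        · omega
        · omega
    have hpos : 2 ≤ F c (b0 - 2) := by
      unfold F
      have hch : 0 < Nat.choose (c - (b0 - 2 + 2)) (b0 - 2) := by
        apply Nat.choose_pos
        omega
      have hpow : 2 ≤ 2 ^ (b0 - 2) := by
        calc 2 = 2 ^ 1 := rfl
        _ ≤ 2 ^ (b0 - 2) := Nat.pow_le_pow_right (by norm_num) (by omega)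
      calc 2 = 2 * 1 := rfl
      _ ≤ 2 ^ (b0 - 2) * Nat.choose (c - (b0 - 2 + 2)) (b0 - 2) :=
        Nat.mul_le_mul hpow hch
    rw [he0]; omega
  · -- 3 ≤ b
    have hb3 : 3 ≤ b := hb
    have heb : e c b = F c (b - 2) := e_eq_F c b (by omega) hb3 hb2
    rw [heb, he0]
    rcases le_or_gt (b - 2) (b0 - 2) with hle | hlt
    · exact F_mono c (b - 2) (b0 - 2) hle hk0c1
    · exact F_anti c (b0 - 2) hk0c2 (b - 2) (by omega)
end

section
/- For c ≥ 3, let k_{c,b} be given by the closed formula of Theorem 1.1 (k_{c,b} = (e(c,b)+e_p(c,b))/4). Then k_{c, ⌈c/3⌉+1} ≥ k_{c,b} for all 2 ≤ b ≤ ⌈(c+1)/2⌉; i.e., the mode of the braid-index distribution of 2-bridge knots of crossing number c is b = ⌈c/3⌉ + 1. -/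
open Classical in
/-- The number `e_p(c,b)` of palindromic or anti-palindromic even continued
fraction representations with crossing number `c` and braid index `b`,
given by its closed formula. -/
noncomputable def ep (c b : ℕ) : ℕ :=
  if 2 ≤ b ∧ b ≤ (c + 2) / 2 ∧ Even c ∧ Odd b then
    2 ^ ((b - 1) / 2) * Nat.choose ((c - b - 1) / 2) ((b - 3) / 2)
  else if 2 ≤ b ∧ b ≤ (c + 2) / 2 ∧ Odd c ∧ Even b then
    2 ^ (b / 2) * Nat.choose ((c - b - 1) / 2) ((b - 2) / 2)
  else 0


lemma key (K E : ℕ) :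
    (K+1)*((K+E+1)*((K+E).choose (K+1))) = (E+1)*(E*((K+E+1).choose K)) := by
  have h1 : (K+E).choose (K+1) * (K+1) = (K+E).choose K * E := by
    have := Nat.choose_succ_right_eq (K+E) K
    simpa using this
  have h2 : (K+E).choose K * (K+E+1) = (K+E+1).choose K * (E+1) := by
    have := Nat.choose_mul_succ_eq (K+E) K
    have h3 : K+E+1-K = E+1 := by omega
    rw [h3] at this
    exact this
  calc (K+1)*((K+E+1)*((K+E).choose (K+1)))
      = (K+E+1)*((K+E).choose (K+1) * (K+1)) := by ring
    _ = (K+E+1)*((K+E).choose K * E) := by rw [h1]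
    _ = E * ((K+E).choose K * (K+E+1)) := by ring
    _ = E * ((K+E+1).choose K * (E+1)) := by rw [h2]
    _ = (E+1)*(E*((K+E+1).choose K)) := by ring

lemma core_ge (K E : ℕ) (h : (K+1)*(K+E+1) ≤ 2*((E+1)*E)) :
    (K+E+1).choose K ≤ 2*((K+E).choose (K+1)) := by
  have pos : 0 < (K+1)*(K+E+1) := by positivity
  apply Nat.le_of_mul_le_mul_left _ pos
  calc (K+1)*(K+E+1) * ((K+E+1).choose K)
      ≤ 2*((E+1)*E) * ((K+E+1).choose K) := Nat.mul_le_mul_right _ h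
    _ = 2*((E+1)*(E*((K+E+1).choose K))) := by ring
    _ = 2*((K+1)*((K+E+1)*((K+E).choose (K+1)))) := by rw [key]
    _ = (K+1)*(K+E+1)*(2*((K+E).choose (K+1))) := by ring

lemma core_le (K E : ℕ) (h : 2*((E+1)*E) ≤ (K+1)*(K+E+1)) :
    2*((K+E).choose (K+1)) ≤ (K+E+1).choose K := by
  have pos : 0 < (K+1)*(K+E+1) := by positivity
  apply Nat.le_of_mul_le_mul_left _ pos
  calc (K+1)*(K+E+1) * (2*((K+E).choose (K+1)))
      = 2*((K+1)*((K+E+1)*((K+E).choose (K+1)))) := by ring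
    _ = 2*((E+1)*(E*((K+E+1).choose K))) := by rw [key]
    _ = 2*((E+1)*E) * ((K+E+1).choose K) := by ring
    _ ≤ (K+1)*(K+E+1) * ((K+E+1).choose K) := Nat.mul_le_mul_right _ h

lemma choose_lower (n : ℕ) : ∀ k, 1 ≤ k → 2*k ≤ n → n ≤ n.choose k := by
  intro k
  induction k with
  | zero => omega
  | succ k ih =>
    intro _ h2
    rcases Nat.eq_zero_or_pos k with rfl | hk
    · simp
    · have h1 : n ≤ n.choose k := ih hk (by omega)
      have : n.choose k ≤ n.choose (k+1) :=
        Nat.choose_le_succ_of_lt_half_left (by omega)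
      omega

lemma vandermonde_le (a b i j : ℕ) : a.choose i * b.choose j ≤ (a+b).choose (i+j) := by
  rw [Nat.add_choose_eq]
  have hmem : (i, j) ∈ Finset.HasAntidiagonal.antidiagonal (i+j) := by
    simp
  exact Finset.single_le_sum (f := fun ij => a.choose ij.1 * b.choose ij.2)
    (fun _ _ => Nat.zero_le _) hmem

lemma e_two (c : ℕ) (h : 3 ≤ c) (ho : Odd c) : e c 2 = 2 := by
  unfold e; rw [if_pos ⟨h, ho, rfl⟩]

lemma e_formula (c b : ℕ) (h3 : 3 ≤ b) (hB : b ≤ (c+2)/2) :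
    e c b = 2^(b-2) * (c-b).choose (b-2) := by
  have hc : 3 ≤ c := by omega
  unfold e
  rw [if_neg (by rintro ⟨-, -, rfl⟩; omega), if_pos ⟨hc, h3, hB⟩]

lemma e_zero2 (c : ℕ) (hc : Even c) : e c 2 = 0 := by
  unfold e
  rw [if_neg, if_neg]
  · rintro ⟨-, h3, -⟩; omega
  · rintro ⟨-, ho, -⟩
    exact (Nat.not_even_iff_odd.mpr ho) hc

lemma ep_even (c b : ℕ) (h2 : 2 ≤ b) (hB : b ≤ (c+2)/2) (hc : Even c) (hb : Odd b) :
    ep c b = 2^((b-1)/2) * ((c-b-1)/2).choose ((b-3)/2) := by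
  unfold ep; rw [if_pos ⟨h2, hB, hc, hb⟩]

lemma ep_odd (c b : ℕ) (h2 : 2 ≤ b) (hB : b ≤ (c+2)/2) (hc : Odd c) (hb : Even b) :
    ep c b = 2^(b/2) * ((c-b-1)/2).choose ((b-2)/2) := by
  unfold ep
  rw [if_neg, if_pos ⟨h2, hB, hc, hb⟩]
  rintro ⟨-, -, hc', -⟩
  exact (Nat.not_even_iff_odd.mpr hc) hc'

lemma ep_zero (c b : ℕ) (h : Even (c+b)) : ep c b = 0 := by
  have h' : c % 2 = b % 2 := by
    rw [Nat.even_iff] at h; omega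
  unfold ep
  rw [if_neg, if_neg]
  · rintro ⟨-, -, hc, hb⟩
    rw [Nat.odd_iff] at hc; rw [Nat.even_iff] at hb; omega
  · rintro ⟨-, -, hc, hb⟩
    rw [Nat.even_iff] at hc; rw [Nat.odd_iff] at hb; omega

lemma e_step_up (c b : ℕ) (hb : 3 ≤ b) (h : 3*b ≤ c+2) : e c b ≤ e c (b+1) := by
  obtain ⟨k, rfl⟩ : ∃ k, b = k+3 := ⟨b-3, by omega⟩
  obtain ⟨d, rfl⟩ : ∃ d, c = 3*k+7+d := ⟨c-(3*k+7), by omega⟩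
  rw [e_formula _ _ (by omega) (by omega), e_formula _ _ (by omega) (by omega)]
  have h1 : 3*k+7+d-(k+3) = 2*k+4+d := by omega
  have h2 : k+3-2 = k+1 := by omega
  have h3 : 3*k+7+d-(k+3+1) = 2*k+3+d := by omega
  have h4 : k+3+1-2 = k+2 := by omega
  rw [h1, h2, h3, h4]
  have hcore : (2*k+4+d).choose (k+1) ≤ 2*((2*k+3+d).choose (k+2)) := by
    have := core_ge (k+1) (k+2+d) (by nlinarith)
    have e1 : k+1+(k+2+d)+1 = 2*k+4+d := by omega
    have e2 : k+1+(k+2+d) = 2*k+3+d := by omega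
    rw [e1, e2] at this
    exact this
  calc 2^(k+1) * (2*k+4+d).choose (k+1)
      ≤ 2^(k+1) * (2*((2*k+3+d).choose (k+2))) := Nat.mul_le_mul_left _ hcore
    _ = 2^(k+2) * (2*k+3+d).choose (k+2) := by ring

lemma e_step_down (c b : ℕ) (hb : 3 ≤ b) (h : c+3 ≤ 3*b) (h2b : 2*b ≤ c) :
    e c (b+1) ≤ e c b := by
  obtain ⟨k, rfl⟩ : ∃ k, b = k+3 := ⟨b-3, by omega⟩
  obtain ⟨s, rfl⟩ : ∃ s, c = 2*k+6+s := ⟨c-(2*k+6), by omega⟩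
  have hs : s ≤ k := by omega
  rw [e_formula _ _ (by omega) (by omega), e_formula _ _ (by omega) (by omega)]
  have h1 : 2*k+6+s-(k+3) = k+3+s := by omega
  have h2 : k+3-2 = k+1 := by omega
  have h3 : 2*k+6+s-(k+3+1) = k+2+s := by omega
  have h4 : k+3+1-2 = k+2 := by omega
  rw [h1, h2, h3, h4]
  have hcore : 2*((k+2+s).choose (k+2)) ≤ (k+3+s).choose (k+1) := by
    have := core_le (k+1) (s+1) (by nlinarith)
    have e1 : k+1+(s+1)+1 = k+3+s := by omega
    have e2 : k+1+(s+1) = k+2+s := by omega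
    rw [e1, e2] at this
    exact this
  calc 2^(k+2) * (k+2+s).choose (k+2)
      = 2^(k+1) * (2*((k+2+s).choose (k+2))) := by ring
    _ ≤ 2^(k+1) * (k+3+s).choose (k+1) := Nat.mul_le_mul_left _ hcore

lemma ep_step_up_even (n j : ℕ) (hj : 1 ≤ j) (h : 3*j+1 ≤ n) :
    ep (2*n) (2*j+1) ≤ ep (2*n) (2*j+3) := by
  obtain ⟨i, rfl⟩ : ∃ i, j = i+1 := ⟨j-1, by omega⟩
  obtain ⟨x, rfl⟩ : ∃ x, n = 3*i+4+x := ⟨n-(3*i+4), by omega⟩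
  rw [ep_even _ _ (by omega) (by omega) ⟨3*i+4+x, by omega⟩ ⟨i+1, by omega⟩,
      ep_even _ _ (by omega) (by omega) ⟨3*i+4+x, by omega⟩ ⟨i+1+1, by omega⟩]
  have h1 : (2*(i+1)+1-1)/2 = i+1 := by omega
  have h2 : (2*(3*i+4+x)-(2*(i+1)+1)-1)/2 = 2*i+2+x := by omega
  have h3 : (2*(i+1)+1-3)/2 = i := by omega
  have h4 : (2*(i+1)+3-1)/2 = i+2 := by omega
  have h5 : (2*(3*i+4+x)-(2*(i+1)+3)-1)/2 = 2*i+1+x := by omega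
  have h6 : (2*(i+1)+3-3)/2 = i+1 := by omega
  rw [h1, h2, h3, h4, h5, h6]
  have hcore : (2*i+2+x).choose i ≤ 2*((2*i+1+x).choose (i+1)) := by
    have := core_ge i (i+1+x) (by nlinarith)
    have e1 : i+(i+1+x)+1 = 2*i+2+x := by omega
    have e2 : i+(i+1+x) = 2*i+1+x := by omega
    rw [e1, e2] at this
    exact this
  calc 2^(i+1) * (2*i+2+x).choose i
      ≤ 2^(i+1) * (2*((2*i+1+x).choose (i+1))) := Nat.mul_le_mul_left _ hcore
    _ = 2^(i+2) * (2*i+1+x).choose (i+1) := by ring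

lemma ep_step_down_even (n j : ℕ) (hj : 1 ≤ j) (h : n ≤ 3*j) (hB : 2*j+2 ≤ n) :
    ep (2*n) (2*j+3) ≤ ep (2*n) (2*j+1) := by
  obtain ⟨i, rfl⟩ : ∃ i, j = i+1 := ⟨j-1, by omega⟩
  obtain ⟨s, rfl⟩ : ∃ s, n = 2*i+4+s := ⟨n-(2*i+4), by omega⟩
  have hs : s+1 ≤ i := by omega
  rw [ep_even _ _ (by omega) (by omega) ⟨2*i+4+s, by omega⟩ ⟨i+1+1, by omega⟩,
      ep_even _ _ (by omega) (by omega) ⟨2*i+4+s, by omega⟩ ⟨i+1, by omega⟩]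
  have h1 : (2*(i+1)+1-1)/2 = i+1 := by omega
  have h2 : (2*(2*i+4+s)-(2*(i+1)+1)-1)/2 = i+2+s := by omega
  have h3 : (2*(i+1)+1-3)/2 = i := by omega
  have h4 : (2*(i+1)+3-1)/2 = i+2 := by omega
  have h5 : (2*(2*i+4+s)-(2*(i+1)+3)-1)/2 = i+1+s := by omega
  have h6 : (2*(i+1)+3-3)/2 = i+1 := by omega
  rw [h1, h2, h3, h4, h5, h6]
  have hcore : 2*((i+1+s).choose (i+1)) ≤ (i+2+s).choose i := by
    have := core_le i (s+1) (by nlinarith)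
    have e1 : i+(s+1)+1 = i+2+s := by omega
    have e2 : i+(s+1) = i+1+s := by omega
    rw [e1, e2] at this
    exact this
  calc 2^(i+2) * (i+1+s).choose (i+1)
      = 2^(i+1) * (2*((i+1+s).choose (i+1))) := by ring
    _ ≤ 2^(i+1) * (i+2+s).choose i := Nat.mul_le_mul_left _ hcore

lemma ep_step_up_odd (n j : ℕ) (hj : 1 ≤ j) (h : 3*j ≤ n) :
    ep (2*n+1) (2*j) ≤ ep (2*n+1) (2*j+2) := by
  obtain ⟨i, rfl⟩ : ∃ i, j = i+1 := ⟨j-1, by omega⟩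
  obtain ⟨x, rfl⟩ : ∃ x, n = 3*i+3+x := ⟨n-(3*i+3), by omega⟩
  rw [ep_odd _ _ (by omega) (by omega) ⟨3*i+3+x, by omega⟩ ⟨i+1, by omega⟩,
      ep_odd _ _ (by omega) (by omega) ⟨3*i+3+x, by omega⟩ ⟨i+2, by omega⟩]
  have h1 : (2*(i+1))/2 = i+1 := by omega
  have h2 : (2*(3*i+3+x)+1-(2*(i+1))-1)/2 = 2*i+2+x := by omega
  have h3 : (2*(i+1)-2)/2 = i := by omega
  have h4 : (2*(i+1)+2)/2 = i+2 := by omega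
  have h5 : (2*(3*i+3+x)+1-(2*(i+1)+2)-1)/2 = 2*i+1+x := by omega
  have h6 : (2*(i+1)+2-2)/2 = i+1 := by omega
  rw [h1, h2, h3, h4, h5, h6]
  have hcore : (2*i+2+x).choose i ≤ 2*((2*i+1+x).choose (i+1)) := by
    have := core_ge i (i+1+x) (by nlinarith)
    have e1 : i+(i+1+x)+1 = 2*i+2+x := by omega
    have e2 : i+(i+1+x) = 2*i+1+x := by omega
    rw [e1, e2] at this
    exact this
  calc 2^(i+1) * (2*i+2+x).choose i
      ≤ 2^(i+1) * (2*((2*i+1+x).choose (i+1))) := Nat.mul_le_mul_left _ hcore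
    _ = 2^(i+2) * (2*i+1+x).choose (i+1) := by ring

lemma ep_step_down_odd (n j : ℕ) (hj : 1 ≤ j) (h : n+2 ≤ 3*j) (hB : 2*j+1 ≤ n) :
    ep (2*n+1) (2*j+2) ≤ ep (2*n+1) (2*j) := by
  obtain ⟨i, rfl⟩ : ∃ i, j = i+1 := ⟨j-1, by omega⟩
  obtain ⟨s, rfl⟩ : ∃ s, n = 2*i+3+s := ⟨n-(2*i+3), by omega⟩
  have hs : s+3 ≤ i+1 := by omega
  rw [ep_odd _ _ (by omega) (by omega) ⟨2*i+3+s, by omega⟩ ⟨i+2, by omega⟩,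
      ep_odd _ _ (by omega) (by omega) ⟨2*i+3+s, by omega⟩ ⟨i+1, by omega⟩]
  have h1 : (2*(i+1))/2 = i+1 := by omega
  have h2 : (2*(2*i+3+s)+1-(2*(i+1))-1)/2 = i+2+s := by omega
  have h3 : (2*(i+1)-2)/2 = i := by omega
  have h4 : (2*(i+1)+2)/2 = i+2 := by omega
  have h5 : (2*(2*i+3+s)+1-(2*(i+1)+2)-1)/2 = i+1+s := by omega
  have h6 : (2*(i+1)+2-2)/2 = i+1 := by omega
  rw [h1, h2, h3, h4, h5, h6]
  have hcore : 2*((i+1+s).choose (i+1)) ≤ (i+2+s).choose i := by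
    have := core_le i (s+1) (by nlinarith)
    have e1 : i+(s+1)+1 = i+2+s := by omega
    have e2 : i+(s+1) = i+1+s := by omega
    rw [e1, e2] at this
    exact this
  calc 2^(i+2) * (i+1+s).choose (i+1)
      = 2^(i+1) * (2*((i+1+s).choose (i+1))) := by ring
    _ ≤ 2^(i+1) * (i+2+s).choose i := Nat.mul_le_mul_left _ hcore

lemma chain1_up (f : ℕ → ℕ) :
    ∀ k b t, b + k = t →
      (∀ x, b ≤ x → x + 1 ≤ t → f x ≤ f (x+1)) → f b ≤ f t := by
  intro k
  induction k with
  | zero =>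
    intro b t h _
    have : t = b := by omega
    rw [this]
  | succ k ih =>
    intro b t h H
    calc f b ≤ f (b+1) := H b le_rfl (by omega)
      _ ≤ f t := ih (b+1) t (by omega) (fun x hx1 hx2 => H x (by omega) hx2)

lemma chain1_down (f : ℕ → ℕ) :
    ∀ k s b, s + k = b →
      (∀ x, s ≤ x → x + 1 ≤ b → f (x+1) ≤ f x) → f b ≤ f s := by
  intro k
  induction k with
  | zero =>
    intro s b h _
    have : b = s := by omega
    rw [this]
  | succ k ih =>
    intro s b h H
    calc f b ≤ f (s+1) :=
          ih (s+1) b (by omega) (fun x hx1 hx2 => H x (by omega) hx2)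
      _ ≤ f s := H s le_rfl (by omega)

lemma chain2_up (f : ℕ → ℕ) :
    ∀ k b t, b + 2*k = t →
      (∀ x, b ≤ x → x + 2 ≤ t → x % 2 = b % 2 → f x ≤ f (x+2)) → f b ≤ f t := by
  intro k
  induction k with
  | zero =>
    intro b t h _
    have : t = b := by omega
    rw [this]
  | succ k ih =>
    intro b t h H
    calc f b ≤ f (b+2) := H b le_rfl (by omega) rfl
      _ ≤ f t := ih (b+2) t (by omega)
          (fun x hx1 hx2 hx3 => H x (by omega) hx2 (by omega))

lemma chain2_down (f : ℕ → ℕ) :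
    ∀ k s b, s + 2*k = b →
      (∀ x, s ≤ x → x + 2 ≤ b → x % 2 = s % 2 → f (x+2) ≤ f x) → f b ≤ f s := by
  intro k
  induction k with
  | zero =>
    intro s b h _
    have : b = s := by omega
    rw [this]
  | succ k ih =>
    intro s b h H
    calc f b ≤ f (s+2) :=
          ih (s+2) b (by omega) (fun x hx1 hx2 hx3 => H x (by omega) hx2 (by omega))
      _ ≤ f s := H s le_rfl (by omega) rfl

lemma e_le_m (c b : ℕ) (hc : 4 ≤ c) (hb : 3 ≤ b) (hB : b ≤ (c+2)/2) :
    e c b ≤ e c ((c+2)/3+1) := by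
  set m := (c+2)/3+1 with hm
  have hm3 : 3 ≤ m := by omega
  have hmB : m ≤ (c+2)/2 := by omega
  rcases le_total b m with h | h
  · exact chain1_up (e c) (m-b) b m (by omega)
      (fun x hx1 hx2 => e_step_up c x (by omega) (by omega))
  · exact chain1_down (e c) (b-m) m b (by omega)
      (fun x hx1 hx2 => e_step_down c x (by omega) (by omega) (by omega))

lemma stepU (c b : ℕ) (hb : 3 ≤ b) (hm : b + 2 ≤ (c+2)/3+1) (hcb : Odd (c+b)) :
    e c b + ep c b ≤ e c (b+2) + ep c (b+2) := by
  have he : e c b ≤ e c (b+2) := by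
    calc e c b ≤ e c (b+1) := e_step_up c b hb (by omega)
      _ ≤ e c (b+2) := e_step_up c (b+1) (by omega) (by omega)
  have hep : ep c b ≤ ep c (b+2) := by
    rcases Nat.even_or_odd c with hc | hc
    · obtain ⟨n, rfl⟩ : ∃ n, c = 2*n := ⟨c/2, by rcases hc with ⟨r, hr⟩; omega⟩
      have hob : Odd b := by
        rcases Nat.even_or_odd b with hbe | hbo
        · exfalso; rcases hbe with ⟨r, hr⟩; rcases hcb with ⟨r', hr'⟩; omega
        · exact hbo
      obtain ⟨j, rfl⟩ : ∃ j, b = 2*j+1 := by rcases hob with ⟨j, hj⟩; exact ⟨j, by omega⟩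
      have : ep (2*n) (2*j+1) ≤ ep (2*n) (2*j+3) :=
        ep_step_up_even n j (by omega) (by omega)
      simpa [show 2*j+1+2 = 2*j+3 by omega] using this
    · obtain ⟨n, rfl⟩ : ∃ n, c = 2*n+1 := by rcases hc with ⟨r, hr⟩; exact ⟨r, by omega⟩
      have heb : Even b := by
        rcases Nat.even_or_odd b with hbe | hbo
        · exact hbe
        · exfalso; rcases hbo with ⟨r, hr⟩; rcases hcb with ⟨r', hr'⟩; omega
      obtain ⟨j, rfl⟩ : ∃ j, b = 2*j := by rcases heb with ⟨j, hj⟩; exact ⟨j, by omega⟩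
      have : ep (2*n+1) (2*j) ≤ ep (2*n+1) (2*j+2) :=
        ep_step_up_odd n j (by omega) (by omega)
      simpa using this
  omega

lemma stepD (c b : ℕ) (hb : 3 ≤ b) (hm : (c+2)/3+1 ≤ b) (hB : b + 2 ≤ (c+2)/2)
    (hcb : Odd (c+b)) :
    e c (b+2) + ep c (b+2) ≤ e c b + ep c b := by
  have he : e c (b+2) ≤ e c b := by
    calc e c (b+2) ≤ e c (b+1) := e_step_down c (b+1) (by omega) (by omega) (by omega)
      _ ≤ e c b := e_step_down c b hb (by omega) (by omega)
  have hep : ep c (b+2) ≤ ep c b := by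
    rcases Nat.even_or_odd c with hc | hc
    · obtain ⟨n, rfl⟩ : ∃ n, c = 2*n := ⟨c/2, by rcases hc with ⟨r, hr⟩; omega⟩
      have hob : Odd b := by
        rcases Nat.even_or_odd b with hbe | hbo
        · exfalso; rcases hbe with ⟨r, hr⟩; rcases hcb with ⟨r', hr'⟩; omega
        · exact hbo
      obtain ⟨j, rfl⟩ : ∃ j, b = 2*j+1 := by rcases hob with ⟨j, hj⟩; exact ⟨j, by omega⟩
      have : ep (2*n) (2*j+3) ≤ ep (2*n) (2*j+1) :=
        ep_step_down_even n j (by omega) (by omega) (by omega)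
      simpa [show 2*j+1+2 = 2*j+3 by omega] using this
    · obtain ⟨n, rfl⟩ : ∃ n, c = 2*n+1 := by rcases hc with ⟨r, hr⟩; exact ⟨r, by omega⟩
      have heb : Even b := by
        rcases Nat.even_or_odd b with hbe | hbo
        · exact hbe
        · exfalso; rcases hbo with ⟨r, hr⟩; rcases hcb with ⟨r', hr'⟩; omega
      obtain ⟨j, rfl⟩ : ∃ j, b = 2*j := by rcases heb with ⟨j, hj⟩; exact ⟨j, by omega⟩
      have : ep (2*n+1) (2*j+2) ≤ ep (2*n+1) (2*j) :=
        ep_step_down_odd n j (by omega) (by omega) (by omega)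
      simpa using this
  omega

lemma cruxsub (s t P Q R Y Cp A : ℕ) (hA : Y*Cp ≤ A) (hcoef : P*Q ≤ 2^t*(R*Cp)) :
    P*(Q*(2^s*Y)) ≤ 2^(s+t)*(R*A) := by
  calc P*(Q*(2^s*Y)) = 2^s*((P*Q)*Y) := by ring
    _ ≤ 2^s*((2^t*(R*Cp))*Y) := Nat.mul_le_mul_left _ (Nat.mul_le_mul_right _ hcoef)
    _ = 2^(s+t)*(R*(Y*Cp)) := by rw [pow_add]; ring
    _ ≤ 2^(s+t)*(R*A) := Nat.mul_le_mul_left _ (Nat.mul_le_mul_left _ hA)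

lemma crux1 (r : ℕ) :
    2^(2*r+1)*((4*r+5).choose (2*r+1)) + 2^(r+1)*((2*r+2).choose r)
      ≤ 2^(2*r+2)*((4*r+4).choose (2*r+2)) := by
  obtain rfl | hr : r = 0 ∨ 1 ≤ r := by omega
  · decide
  set C1 := (4*r+5).choose (2*r+1) with hC1
  set Z := (4*r+4).choose (2*r+2) with hZdef
  set Y := (2*r+2).choose r with hYdef
  have hkey : (2*r+2)*((4*r+5)*Z) = (2*r+4)*((2*r+3)*C1) := by
    have hk := key (2*r+1) (2*r+3)
    rw [show 2*r+1+(2*r+3) = 4*r+4 from by omega, show 2*r+1+1 = 2*r+2 from by omega,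
        show 4*r+4+1 = 4*r+5 from by omega, show 2*r+3+1 = 2*r+4 from by omega] at hk
    exact hk
  have hsymm : (2*r+2).choose (r+2) = Y := by
    have h := Nat.choose_symm (show r+2 ≤ 2*r+2 by omega)
    rw [show 2*r+2-(r+2) = r from by omega] at h
    exact h.symm
  have hv : Y * Y ≤ Z := by
    have h := vandermonde_le (2*r+2) (2*r+2) r (r+2)
    rw [show 2*r+2+(2*r+2) = 4*r+4 from by omega, show r+(r+2) = 2*r+2 from by omega,
        hsymm] at h
    exact h
  have hY : 2*r+2 ≤ Y := choose_lower (2*r+2) r hr (by omega)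
  have ha : 2 ≤ 2^r := by
    calc 2 = 2^1 := by norm_num
      _ ≤ 2^r := Nat.pow_le_pow_right (by norm_num) hr
  have hcoef : (2*r+3)*(2*r+4) ≤ 2^r*((10*r+14)*Y) := by
    have h1 : 2*((10*r+14)*(2*r+2)) ≤ 2^r*((10*r+14)*Y) :=
      Nat.mul_le_mul ha (Nat.mul_le_mul_left _ hY)
    nlinarith
  have hsub : (2*r+3)*((2*r+4)*(2^(r+1)*Y)) ≤ 2^(2*r+1)*((10*r+14)*Z) := by
    have h := cruxsub (r+1) r (2*r+3) (2*r+4) (10*r+14) Y Y Z hv hcoef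
    rw [show r+1+r = 2*r+1 from by omega] at h
    exact h
  have pos : 0 < (2*r+3)*(2*r+4) := by positivity
  apply Nat.le_of_mul_le_mul_left _ pos
  calc (2*r+3)*(2*r+4)*(2^(2*r+1)*C1 + 2^(r+1)*Y)
      = 2^(2*r+1)*((2*r+4)*((2*r+3)*C1)) + (2*r+3)*((2*r+4)*(2^(r+1)*Y)) := by ring
    _ = 2^(2*r+1)*((2*r+2)*((4*r+5)*Z)) + (2*r+3)*((2*r+4)*(2^(r+1)*Y)) := by rw [hkey]
    _ ≤ 2^(2*r+1)*((2*r+2)*((4*r+5)*Z)) + 2^(2*r+1)*((10*r+14)*Z) :=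
        Nat.add_le_add_left hsub _
    _ = (2*r+3)*(2*r+4)*(2^(2*r+2)*Z) := by ring

lemma crux2 (r : ℕ) :
    2^(2*r+3)*((4*r+3).choose (2*r+3)) + 2^(r+2)*((2*r+1).choose (r+1))
      ≤ 2^(2*r+2)*((4*r+4).choose (2*r+2)) := by
  set C1 := (4*r+3).choose (2*r+3) with hC1
  set Z := (4*r+4).choose (2*r+2) with hZdef
  set Y := (2*r+1).choose (r+1) with hYdef
  set Cp := (2*r+3).choose (r+1) with hCp'
  have hkey : (2*r+3)*((4*r+4)*C1) = (2*r+2)*((2*r+1)*Z) := by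
    have hk := key (2*r+2) (2*r+1)
    rw [show 2*r+2+(2*r+1) = 4*r+3 from by omega, show 2*r+2+1 = 2*r+3 from by omega,
        show 4*r+3+1 = 4*r+4 from by omega, show 2*r+1+1 = 2*r+2 from by omega] at hk
    exact hk
  have hv : Y * Cp ≤ Z := by
    have h := vandermonde_le (2*r+1) (2*r+3) (r+1) (r+1)
    rw [show 2*r+1+(2*r+3) = 4*r+4 from by omega,
        show r+1+(r+1) = 2*r+2 from by omega] at h
    exact h
  have hCp : 2*r+3 ≤ Cp := choose_lower (2*r+3) (r+1) (by omega) (by omega)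
  have ha : 1 ≤ 2^r := Nat.one_le_two_pow
  have hcoef : (2*r+3)*(4*r+4) ≤ 2^r*((8*r+8)*Cp) := by
    have h1 : 1*((8*r+8)*(2*r+3)) ≤ 2^r*((8*r+8)*Cp) :=
      Nat.mul_le_mul ha (Nat.mul_le_mul_left _ hCp)
    nlinarith
  have hsub : (2*r+3)*((4*r+4)*(2^(r+2)*Y)) ≤ 2^(2*r+2)*((8*r+8)*Z) := by
    have h := cruxsub (r+2) r (2*r+3) (4*r+4) (8*r+8) Y Cp Z hv hcoef
    rw [show r+2+r = 2*r+2 from by omega] at h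
    exact h
  have pos : 0 < (2*r+3)*(4*r+4) := by positivity
  apply Nat.le_of_mul_le_mul_left _ pos
  calc (2*r+3)*(4*r+4)*(2^(2*r+3)*C1 + 2^(r+2)*Y)
      = 2^(2*r+3)*((2*r+3)*((4*r+4)*C1)) + (2*r+3)*((4*r+4)*(2^(r+2)*Y)) := by ring
    _ = 2^(2*r+3)*((2*r+2)*((2*r+1)*Z)) + (2*r+3)*((4*r+4)*(2^(r+2)*Y)) := by rw [hkey]
    _ ≤ 2^(2*r+3)*((2*r+2)*((2*r+1)*Z)) + 2^(2*r+2)*((8*r+8)*Z) :=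
        Nat.add_le_add_left hsub _
    _ = (2*r+3)*(4*r+4)*(2^(2*r+2)*Z) := by ring

lemma crux3 (r : ℕ) :
    2^(2*r+2)*((4*r+7).choose (2*r+2)) + 2^(r+2)*((2*r+3).choose (r+1))
      ≤ 2^(2*r+3)*((4*r+6).choose (2*r+3)) := by
  set C1 := (4*r+7).choose (2*r+2) with hC1
  set A := (4*r+6).choose (2*r+3) with hAdef
  set Y := (2*r+3).choose (r+1) with hYdef
  have hkey : (2*r+3)*((4*r+7)*A) = (2*r+5)*((2*r+4)*C1) := by
    have hk := key (2*r+2) (2*r+4)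
    rw [show 2*r+2+(2*r+4) = 4*r+6 from by omega, show 2*r+2+1 = 2*r+3 from by omega,
        show 4*r+6+1 = 4*r+7 from by omega, show 2*r+4+1 = 2*r+5 from by omega] at hk
    exact hk
  have hsymm : (2*r+3).choose (r+2) = Y := by
    have h := Nat.choose_symm (show r+2 ≤ 2*r+3 by omega)
    rw [show 2*r+3-(r+2) = r+1 from by omega] at h
    exact h.symm
  have hv : Y * Y ≤ A := by
    have h := vandermonde_le (2*r+3) (2*r+3) (r+1) (r+2)
    rw [show 2*r+3+(2*r+3) = 4*r+6 from by omega,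
        show r+1+(r+2) = 2*r+3 from by omega, hsymm] at h
    exact h
  have hY : 2*r+3 ≤ Y := choose_lower (2*r+3) (r+1) (by omega) (by omega)
  have ha : 1 ≤ 2^r := Nat.one_le_two_pow
  have hcoef : (2*r+5)*(2*r+4) ≤ 2^r*((10*r+19)*Y) := by
    have h1 : 1*((10*r+19)*(2*r+3)) ≤ 2^r*((10*r+19)*Y) :=
      Nat.mul_le_mul ha (Nat.mul_le_mul_left _ hY)
    nlinarith
  have hsub : (2*r+5)*((2*r+4)*(2^(r+2)*Y)) ≤ 2^(2*r+2)*((10*r+19)*A) := by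
    have h := cruxsub (r+2) r (2*r+5) (2*r+4) (10*r+19) Y Y A hv hcoef
    rw [show r+2+r = 2*r+2 from by omega] at h
    exact h
  have pos : 0 < (2*r+5)*(2*r+4) := by positivity
  apply Nat.le_of_mul_le_mul_left _ pos
  calc (2*r+5)*(2*r+4)*(2^(2*r+2)*C1 + 2^(r+2)*Y)
      = 2^(2*r+2)*((2*r+5)*((2*r+4)*C1)) + (2*r+5)*((2*r+4)*(2^(r+2)*Y)) := by ring
    _ = 2^(2*r+2)*((2*r+3)*((4*r+7)*A)) + (2*r+5)*((2*r+4)*(2^(r+2)*Y)) := by rw [hkey]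
    _ ≤ 2^(2*r+2)*((2*r+3)*((4*r+7)*A)) + 2^(2*r+2)*((10*r+19)*A) :=
        Nat.add_le_add_left hsub _
    _ = (2*r+5)*(2*r+4)*(2^(2*r+3)*A) := by ring

lemma crux4 (r : ℕ) :
    2^(2*r+4)*((4*r+5).choose (2*r+4)) + 2^(r+3)*((2*r+2).choose (r+2))
      ≤ 2^(2*r+3)*((4*r+6).choose (2*r+3)) := by
  set C1 := (4*r+5).choose (2*r+4) with hC1
  set A := (4*r+6).choose (2*r+3) with hAdef
  set Y := (2*r+2).choose (r+2) with hYdef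
  set Cp := (2*r+4).choose (r+1) with hCp'
  have hkey : (2*r+4)*((4*r+6)*C1) = (2*r+3)*((2*r+2)*A) := by
    have hk := key (2*r+3) (2*r+2)
    rw [show 2*r+3+(2*r+2) = 4*r+5 from by omega, show 2*r+3+1 = 2*r+4 from by omega,
        show 4*r+5+1 = 4*r+6 from by omega, show 2*r+2+1 = 2*r+3 from by omega] at hk
    exact hk
  have hv : Y * Cp ≤ A := by
    have h := vandermonde_le (2*r+2) (2*r+4) (r+2) (r+1)
    rw [show 2*r+2+(2*r+4) = 4*r+6 from by omega,
        show r+2+(r+1) = 2*r+3 from by omega] at h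
    exact h
  have hCp : 2*r+4 ≤ Cp := choose_lower (2*r+4) (r+1) (by omega) (by omega)
  have ha : 2 ≤ 2^(r+1) := by
    calc 2 = 2^1 := by norm_num
      _ ≤ 2^(r+1) := Nat.pow_le_pow_right (by norm_num) (by omega)
  have hcoef : (2*r+4)*(4*r+6) ≤ 2^(r+1)*((4*r+6)*Cp) := by
    have h1 : 2*((4*r+6)*(2*r+4)) ≤ 2^(r+1)*((4*r+6)*Cp) :=
      Nat.mul_le_mul ha (Nat.mul_le_mul_left _ hCp)
    nlinarith
  have hsub : (2*r+4)*((4*r+6)*(2^(r+3)*Y)) ≤ 2^(2*r+4)*((4*r+6)*A) := by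
    have h := cruxsub (r+3) (r+1) (2*r+4) (4*r+6) (4*r+6) Y Cp A hv hcoef
    rw [show r+3+(r+1) = 2*r+4 from by omega] at h
    exact h
  have pos : 0 < (2*r+4)*(4*r+6) := by positivity
  apply Nat.le_of_mul_le_mul_left _ pos
  calc (2*r+4)*(4*r+6)*(2^(2*r+4)*C1 + 2^(r+3)*Y)
      = 2^(2*r+4)*((2*r+4)*((4*r+6)*C1)) + (2*r+4)*((4*r+6)*(2^(r+3)*Y)) := by ring
    _ = 2^(2*r+4)*((2*r+3)*((2*r+2)*A)) + (2*r+4)*((4*r+6)*(2^(r+3)*Y)) := by rw [hkey]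
    _ ≤ 2^(2*r+4)*((2*r+3)*((2*r+2)*A)) + 2^(2*r+4)*((4*r+6)*A) :=
        Nat.add_le_add_left hsub _
    _ = (2*r+4)*(4*r+6)*(2^(2*r+3)*A) := by ring

lemma crux_low (c : ℕ) (h26 : c % 6 = 2 ∨ c % 6 = 5) (hc7 : 7 ≤ c) :
    e c ((c+2)/3) + ep c ((c+2)/3) ≤ e c ((c+2)/3+1) := by
  rcases h26 with h | h
  · obtain ⟨r, rfl⟩ : ∃ r, c = 6*r+8 := ⟨(c-8)/6, by omega⟩
    rw [show (6*r+8+2)/3 = 2*r+3 from by omega]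
    rw [e_formula _ (2*r+3) (by omega) (by omega),
        e_formula _ (2*r+3+1) (by omega) (by omega),
        ep_even _ (2*r+3) (by omega) (by omega) ⟨3*r+4, by omega⟩ ⟨r+1, by omega⟩]
    rw [show 2*r+3-2 = 2*r+1 from by omega,
        show 6*r+8-(2*r+3) = 4*r+5 from by omega,
        show (2*r+3-1)/2 = r+1 from by omega,
        show (4*r+5-1)/2 = 2*r+2 from by omega,
        show (2*r+3-3)/2 = r from by omega,
        show 2*r+3+1-2 = 2*r+2 from by omega,
        show 6*r+8-(2*r+3+1) = 4*r+4 from by omega]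
    exact crux1 r
  · obtain ⟨r, rfl⟩ : ∃ r, c = 6*r+11 := ⟨(c-11)/6, by omega⟩
    rw [show (6*r+11+2)/3 = 2*r+4 from by omega]
    rw [e_formula _ (2*r+4) (by omega) (by omega),
        e_formula _ (2*r+4+1) (by omega) (by omega),
        ep_odd _ (2*r+4) (by omega) (by omega) ⟨3*r+5, by omega⟩ ⟨r+2, by omega⟩]
    rw [show 2*r+4-2 = 2*r+2 from by omega,
        show 6*r+11-(2*r+4) = 4*r+7 from by omega,
        show (2*r+4)/2 = r+2 from by omega,
        show (4*r+7-1)/2 = 2*r+3 from by omega,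
        show (2*r+2)/2 = r+1 from by omega,
        show 2*r+4+1-2 = 2*r+3 from by omega,
        show 6*r+11-(2*r+4+1) = 4*r+6 from by omega]
    exact crux3 r

lemma crux_high (c : ℕ) (h26 : c % 6 = 2 ∨ c % 6 = 5) (hc7 : 7 ≤ c) :
    e c ((c+2)/3+2) + ep c ((c+2)/3+2) ≤ e c ((c+2)/3+1) := by
  rcases h26 with h | h
  · obtain ⟨r, rfl⟩ : ∃ r, c = 6*r+8 := ⟨(c-8)/6, by omega⟩
    rw [show (6*r+8+2)/3 = 2*r+3 from by omega]
    rw [e_formula _ (2*r+3+2) (by omega) (by omega),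
        e_formula _ (2*r+3+1) (by omega) (by omega),
        ep_even _ (2*r+3+2) (by omega) (by omega) ⟨3*r+4, by omega⟩ ⟨r+2, by omega⟩]
    rw [show 2*r+3+2-2 = 2*r+3 from by omega,
        show 6*r+8-(2*r+3+2) = 4*r+3 from by omega,
        show (2*r+3+2-1)/2 = r+2 from by omega,
        show (4*r+3-1)/2 = 2*r+1 from by omega,
        show (2*r+3+2-3)/2 = r+1 from by omega,
        show 2*r+3+1-2 = 2*r+2 from by omega,
        show 6*r+8-(2*r+3+1) = 4*r+4 from by omega]
    exact crux2 r
  · obtain ⟨r, rfl⟩ : ∃ r, c = 6*r+11 := ⟨(c-11)/6, by omega⟩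
    rw [show (6*r+11+2)/3 = 2*r+4 from by omega]
    rw [e_formula _ (2*r+4+2) (by omega) (by omega),
        e_formula _ (2*r+4+1) (by omega) (by omega),
        ep_odd _ (2*r+4+2) (by omega) (by omega) ⟨3*r+5, by omega⟩ ⟨r+3, by omega⟩]
    rw [show 2*r+4+2-2 = 2*r+4 from by omega,
        show 6*r+11-(2*r+4+2) = 4*r+5 from by omega,
        show (2*r+4+2)/2 = r+3 from by omega,
        show (4*r+5-1)/2 = 2*r+2 from by omega,
        show (2*r+4)/2 = r+2 from by omega,
        show 2*r+4+1-2 = 2*r+3 from by omega,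
        show 6*r+11-(2*r+4+1) = 4*r+6 from by omega]
    exact crux4 r

lemma main_nat (c b : ℕ) (hc : 3 ≤ c) (hb1 : 2 ≤ b) (hb2 : b ≤ (c+2)/2) :
    e c b + ep c b ≤ e c ((c+2)/3+1) + ep c ((c+2)/3+1) := by
  by_cases hbm : b = (c+2)/3+1
  · rw [hbm]
  by_cases hb3 : 3 ≤ b
  · -- main case
    have hc4 : 4 ≤ c := by omega
    have hm3 : 3 ≤ (c+2)/3+1 := by omega
    have hmB : (c+2)/3+1 ≤ (c+2)/2 := by omega
    by_cases hcb : Odd (c + b)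
    · have hcb' : (c + b) % 2 = 1 := Nat.odd_iff.mp hcb
      by_cases hcm : Odd (c + ((c+2)/3+1))
      · have hcm' : (c + ((c+2)/3+1)) % 2 = 1 := Nat.odd_iff.mp hcm
        rcases le_or_gt b ((c+2)/3+1) with h | h
        · exact chain2_up (fun x => e c x + ep c x) (((c+2)/3+1-b)/2) b ((c+2)/3+1)
            (by omega)
            (fun x hx1 hx2 hx3 => stepU c x (by omega) (by omega)
              (Nat.odd_iff.mpr (by omega)))
        · exact chain2_down (fun x => e c x + ep c x) ((b-((c+2)/3+1))/2) ((c+2)/3+1) b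
            (by omega)
            (fun x hx1 hx2 hx3 => stepD c x (by omega) (by omega) (by omega)
              (Nat.odd_iff.mpr (by omega)))
      · have hcm' : (c + ((c+2)/3+1)) % 2 = 0 :=
          Nat.even_iff.mp (Nat.not_odd_iff_even.mp hcm)
        have h26 : c % 6 = 2 ∨ c % 6 = 5 := by omega
        rcases le_or_gt b ((c+2)/3+1) with h | h
        · -- b ≤ m, b ≠ m, opposite parity: b ≤ m-1, climb to m-1
          have hc7 : 7 ≤ c := by omega
          have hchain : e c b + ep c b ≤ e c ((c+2)/3) + ep c ((c+2)/3) := by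
            have := chain2_up (fun x => e c x + ep c x) (((c+2)/3-b)/2) b ((c+2)/3)
              (by omega)
              (fun x hx1 hx2 hx3 => stepU c x (by omega) (by omega)
                (Nat.odd_iff.mpr (by omega)))
            exact this
          have hcl := crux_low c h26 hc7
          have := Nat.le_add_right (e c ((c+2)/3+1)) (ep c ((c+2)/3+1))
          omega
        · -- b ≥ m+1, descend to m+1
          have hc7 : 7 ≤ c := by omega
          have hchain : e c b + ep c b ≤ e c ((c+2)/3+2) + ep c ((c+2)/3+2) := by
            have := chain2_down (fun x => e c x + ep c x) ((b-((c+2)/3+2))/2)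
              ((c+2)/3+2) b (by omega)
              (fun x hx1 hx2 hx3 => stepD c x (by omega) (by omega) (by omega)
                (Nat.odd_iff.mpr (by omega)))
            exact this
          have hch := crux_high c h26 hc7
          have := Nat.le_add_right (e c ((c+2)/3+1)) (ep c ((c+2)/3+1))
          omega
    · -- not in ep class
      have hcb' : (c + b) % 2 = 0 := Nat.even_iff.mp (Nat.not_odd_iff_even.mp hcb)
      have h0 : ep c b = 0 := ep_zero c b (Nat.even_iff.mpr (by omega))
      have h1 : e c b ≤ e c ((c+2)/3+1) := e_le_m c b hc4 hb3 hb2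
      have := Nat.le_add_right (e c ((c+2)/3+1)) (ep c ((c+2)/3+1))
      omega
  · -- b = 2
    have hb2' : b = 2 := by omega
    subst hb2'
    have hc4 : 4 ≤ c := by omega
    rcases Nat.even_or_odd c with hce | hco
    · have h1 : e c 2 = 0 := e_zero2 c hce
      have h2 : ep c 2 = 0 := ep_zero c 2 (by rcases hce with ⟨t, ht⟩; exact ⟨t+1, by omega⟩)
      omega
    · have hc5 : 5 ≤ c := by
        rcases hco with ⟨t, ht⟩; omega
      have h1 : e c 2 = 2 := e_two c hc hco
      have h2 : ep c 2 = 2 := by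
        rw [ep_odd c 2 le_rfl (by omega) hco ⟨1, by omega⟩]
        rw [show (2-2)/2 = 0 from by omega, Nat.choose_zero_right]
        omega
      have h3 : e c 3 = 2*(c-3) := by
        rw [e_formula c 3 le_rfl (by omega)]
        rw [show (3:ℕ)-2 = 1 from by omega, Nat.choose_one_right]
        omega
      have h4 : e c 3 ≤ e c ((c+2)/3+1) := e_le_m c 3 hc4 le_rfl (by omega)
      have := Nat.le_add_right (e c ((c+2)/3+1)) (ep c ((c+2)/3+1))
      omega


/-- The number of 2-bridge knots with crossing number `c` and braid index `b`. -/
noncomputable def numKnots (c b : ℕ) : ℚ := ((e c b : ℚ) + (ep c b : ℚ)) / 4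

theorem numKnots_mode (c : ℕ) (hc : 3 ≤ c) (b : ℕ) (hb1 : 2 ≤ b)
    (hb2 : b ≤ (c + 2) / 2) :
    numKnots c b ≤ numKnots c ((c + 2) / 3 + 1) := by
  have h := main_nat c b hc hb1 hb2
  unfold numKnots
  have h' : ((e c b : ℚ) + (ep c b : ℚ)) ≤
      ((e c ((c+2)/3+1) : ℚ) + (ep c ((c+2)/3+1) : ℚ)) := by exact_mod_cast h
  linarith
end

section
/- For c ≥ 3, tbi(c) = ((6c+22)·2^{c−2} + (6c−46)·(−1)^c)/27, where tbi(c) = Σ_{b=2}^{⌈(c+1)/2⌉} b·e(c,b). -/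
open Finset

/-- The total braid index. -/
noncomputable def tbi (c : ℕ) : ℕ := ∑ b ∈ Finset.Icc 2 ((c + 2) / 2), b * e c b


def A (n : ℕ) : ℕ := ∑ k ∈ range (n+1), 2^k * (n-k).choose k
def B (n : ℕ) : ℕ := ∑ k ∈ range (n+1), k * (2^k * (n-k).choose k)

lemma A_succ (n : ℕ) :
    A (n+1) = 1 + ∑ k ∈ range (n+1), 2^(k+1) * (n-k).choose (k+1) := by
  rw [A, Finset.sum_range_succ']
  have : ∀ k ∈ range (n+1), 2^(k+1) * (n+1-(k+1)).choose (k+1)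
      = 2^(k+1) * (n-k).choose (k+1) := by
    intro k hk
    congr 2
    omega
  rw [Finset.sum_congr rfl this]
  simp [add_comm]

lemma A_rec (n : ℕ) : A (n+2) = A (n+1) + 2 * A n := by
  have h2 : A (n+2) = 1 + ∑ k ∈ range (n+1),
      2^(k+1) * ((n-k).choose k + (n-k).choose (k+1)) := by
    rw [A, Finset.sum_range_succ, Finset.sum_range_succ']
    have h0 : n + 2 - (n + 2) = 0 := by omega
    rw [h0, Nat.choose_zero_succ, mul_zero, add_zero]
    have : ∀ k ∈ range (n+1), 2^(k+1) * (n+2-(k+1)).choose (k+1)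
        = 2^(k+1) * ((n-k).choose k + (n-k).choose (k+1)) := by
      intro k hk
      simp only [mem_range] at hk
      have : n + 2 - (k+1) = (n-k) + 1 := by omega
      rw [this, Nat.choose_succ_succ]
    rw [Finset.sum_congr rfl this]
    simp [add_comm]
  rw [h2, A_succ]
  have : ∑ k ∈ range (n+1), 2^(k+1) * ((n-k).choose k + (n-k).choose (k+1))
      = (∑ k ∈ range (n+1), 2^(k+1) * (n-k).choose (k+1))
        + 2 * ∑ k ∈ range (n+1), 2^k * (n-k).choose k := by
    rw [Finset.mul_sum, ← Finset.sum_add_distrib]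
    apply Finset.sum_congr rfl
    intro k hk
    ring
  rw [this, A]
  ring

lemma B_succ (n : ℕ) :
    B (n+1) = ∑ k ∈ range (n+1), (k+1) * (2^(k+1) * (n-k).choose (k+1)) := by
  rw [B, Finset.sum_range_succ']
  have : ∀ k ∈ range (n+1), (k+1) * (2^(k+1) * (n+1-(k+1)).choose (k+1))
      = (k+1) * (2^(k+1) * (n-k).choose (k+1)) := by
    intro k hk
    congr 3
    omega
  rw [Finset.sum_congr rfl this]
  simp

lemma B_rec (n : ℕ) : B (n+2) = B (n+1) + 2 * B n + 2 * A n := by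
  have h2 : B (n+2) = ∑ k ∈ range (n+1),
      (k+1) * (2^(k+1) * ((n-k).choose k + (n-k).choose (k+1))) := by
    rw [B, Finset.sum_range_succ, Finset.sum_range_succ']
    have h0 : n + 2 - (n + 2) = 0 := by omega
    rw [h0, Nat.choose_zero_succ, mul_zero, mul_zero, add_zero]
    have : ∀ k ∈ range (n+1), (k+1) * (2^(k+1) * (n+2-(k+1)).choose (k+1))
        = (k+1) * (2^(k+1) * ((n-k).choose k + (n-k).choose (k+1))) := by
      intro k hk
      simp only [mem_range] at hk
      have : n + 2 - (k+1) = (n-k) + 1 := by omega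
      rw [this, Nat.choose_succ_succ]
    rw [Finset.sum_congr rfl this]
    simp
  rw [h2, B_succ]
  have : ∑ k ∈ range (n+1), (k+1) * (2^(k+1) * ((n-k).choose k + (n-k).choose (k+1)))
      = (∑ k ∈ range (n+1), (k+1) * (2^(k+1) * (n-k).choose (k+1)))
        + (2 * ∑ k ∈ range (n+1), k * (2^k * (n-k).choose k)
           + 2 * ∑ k ∈ range (n+1), 2^k * (n-k).choose k) := by
    rw [Finset.mul_sum, Finset.mul_sum, ← Finset.sum_add_distrib, ← Finset.sum_add_distrib]
    apply Finset.sum_congr rfl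
    intro k hk
    ring
  rw [this, A, B]
  ring

lemma AB_closed (n : ℕ) :
    (3 * (A n : ℤ) = 2^(n+1) + (-1)^n) ∧
    (27 * (B n : ℤ) = (6*(n:ℤ) - 2) * 2^n + (6*(n:ℤ) + 2) * (-1)^n) := by
  induction n using Nat.strong_induction_on with
  | _ n ih =>
    match n with
    | 0 => norm_num [A, B]
    | 1 => norm_num [A, B, Finset.sum_range_succ]
    | (n+2) =>
      obtain ⟨ha1, hb1⟩ := ih (n+1) (by omega)
      obtain ⟨ha0, hb0⟩ := ih n (by omega)
      constructor
      · rw [A_rec]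
        push_cast
        linear_combination ha1 + 2 * ha0
      · rw [B_rec]
        push_cast
        push_cast at ha0 hb0 ha1 hb1
        linear_combination hb1 + 2 * hb0 + 18 * ha0

lemma BA_sum (n : ℕ) :
    B n + 2 * A n = (∑ k ∈ range n, (k+3) * (2^(k+1) * (n-(k+1)).choose (k+1))) + 2 := by
  have h : B n + 2 * A n = ∑ k ∈ range (n+1), (k+2) * (2^k * (n-k).choose k) := by
    rw [B, A, Finset.mul_sum, ← Finset.sum_add_distrib]
    apply Finset.sum_congr rfl
    intro k hk
    ring
  rw [h, Finset.sum_range_succ']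
  norm_num

lemma tbi_eq (c : ℕ) (hc : 3 ≤ c) :
    tbi c + 2 = (if Odd c then 4 else 0) + (B (c-2) + 2 * A (c-2)) := by
  set m := (c+2)/2 with hm
  have hm2 : 2 ≤ m := by omega
  have hmc : m ≤ c := by omega
  have hins : Finset.Icc 2 m = insert 2 (Finset.Icc 3 m) := by
    ext x; simp only [Finset.mem_Icc, Finset.mem_insert]; omega
  have h2not : (2 : ℕ) ∉ Finset.Icc 3 m := by simp
  rw [tbi, hins, Finset.sum_insert h2not]
  have he2 : 2 * e c 2 = if Odd c then 4 else 0 := by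
    by_cases ho : Odd c
    · rw [e, if_pos ⟨hc, ho, rfl⟩, if_pos ho]
    · rw [e, if_neg (by tauto), if_neg (by omega), if_neg ho, mul_zero]
  rw [he2]
  have hstep1 : ∑ b ∈ Finset.Icc 3 m, b * e c b
      = ∑ b ∈ Finset.Icc 3 m, b * (2^(b-2) * (c-b).choose (b-2)) := by
    apply Finset.sum_congr rfl
    intro b hb
    simp only [Finset.mem_Icc] at hb
    rw [e, if_neg (by omega), if_pos ⟨hc, hb.1, hb.2⟩]
  have hstep2 : ∑ b ∈ Finset.Icc 3 m, b * (2^(b-2) * (c-b).choose (b-2))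
      = ∑ b ∈ Finset.Icc 3 c, b * (2^(b-2) * (c-b).choose (b-2)) := by
    apply Finset.sum_subset (Finset.Icc_subset_Icc_right hmc)
    intro b hb hbn
    simp only [Finset.mem_Icc] at hb hbn
    have hz : (c-b).choose (b-2) = 0 := Nat.choose_eq_zero_of_lt (by omega)
    rw [hz, mul_zero, mul_zero]
  have hstep3 : ∑ b ∈ Finset.Icc 3 c, b * (2^(b-2) * (c-b).choose (b-2))
      = ∑ k ∈ range (c-2), (k+3) * (2^(k+1) * ((c-2)-(k+1)).choose (k+1)) := by
    rw [← Finset.Ico_add_one_right_eq_Icc, Finset.sum_Ico_eq_sum_range]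
    apply Finset.sum_congr (by rw [show c + 1 - 3 = c - 2 by omega])
    intro k hk
    simp only [Finset.mem_range] at hk
    rw [show 3 + k = k + 3 by omega, show k + 3 - 2 = k + 1 by omega,
      show c - (k+3) = (c-2) - (k+1) by omega]
  rw [hstep1, hstep2, hstep3, BA_sum]
  ring
theorem tbi_closed_formula (c : ℕ) (hc : 3 ≤ c) :
    (27 : ℤ) * tbi c = (6 * (c : ℤ) + 22) * 2 ^ (c - 2) + (6 * (c : ℤ) - 46) * (-1) ^ c := by
  obtain ⟨n, rfl⟩ : ∃ n, c = n + 2 := ⟨c - 2, by omega⟩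
  have key := tbi_eq (n+2) hc
  obtain ⟨ha, hb⟩ := AB_closed n
  have h2 : n + 2 - 2 = n := by omega
  rw [h2] at key ⊢
  have hodd : Odd (n+2) ↔ Odd n := by simp [Nat.odd_add]
  rcases Nat.even_or_odd n with he | ho
  · have hno : ¬ Odd (n+2) := by rw [hodd]; simpa using he
    rw [if_neg hno] at key
    have hcast : (tbi (n+2) : ℤ) + 2 = 0 + ((B n : ℤ) + 2 * (A n : ℤ)) := by
      exact_mod_cast key
    have he' : ((-1 : ℤ))^n = 1 := he.neg_one_pow
    push_cast
    linear_combination 27 * hcast + hb + 18 * ha + 54 * he'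
  · have hyo : Odd (n+2) := hodd.mpr ho
    rw [if_pos hyo] at key
    have hcast : (tbi (n+2) : ℤ) + 2 = 4 + ((B n : ℤ) + 2 * (A n : ℤ)) := by
      exact_mod_cast key
    have ho' : ((-1 : ℤ))^n = -1 := ho.neg_one_pow
    push_cast
    linear_combination 27 * hcast + hb + 18 * ha + 54 * ho'
end

section
/- Define tbi_p(c) = Σ_b b·e_p(c,b). For c ≥ 7, tbi_p(c) = tbi_p(c−2) + 2·tbi_p(c−4) + 4·e_p(c−4), and for c ≥ 3, tbi_p(c) equals ((3c+13)·2^{c/2} + (12c+14)·(−1)^{c/2})/27 if c is even, and ((6c+14)·2^{(c−1)/2} − (12c+8)·(−1)^{(c−1)/2})/27 if c is odd. -/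
/-- `e_p(c)`, the total number of (anti-)palindromic representations. -/
noncomputable def epTot (c : ℕ) : ℕ := ∑ b ∈ Finset.Icc 2 ((c + 2) / 2), ep c b

/-- The total palindromic braid index. -/
noncomputable def tbip (c : ℕ) : ℕ := ∑ b ∈ Finset.Icc 2 ((c + 2) / 2), b * ep c b

/- ### Auxiliary lemmas -/

lemma ep_zero_of_lt {c b : ℕ} (h : b < 2) : ep c b = 0 := by
  rw [ep, if_neg, if_neg] <;> rintro ⟨h1, -⟩ <;> omega

lemma ep_zero_of_gt {c b : ℕ} (h : (c + 2) / 2 < b) : ep c b = 0 := by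
  rw [ep, if_neg, if_neg] <;> rintro ⟨-, h1, -⟩ <;> omega

lemma ep_ee (m j : ℕ) : ep (2 * m) (2 * j) = 0 := by
  rw [ep, if_neg, if_neg]
  · rintro ⟨-, -, hc, -⟩
    rw [Nat.odd_iff] at hc; omega
  · rintro ⟨-, -, -, hb⟩
    rw [Nat.odd_iff] at hb; omega

lemma ep_oo (m j : ℕ) : ep (2 * m + 1) (2 * j + 1) = 0 := by
  rw [ep, if_neg, if_neg]
  · rintro ⟨-, -, -, hb⟩
    rw [Nat.even_iff] at hb; omega
  · rintro ⟨-, -, hc, -⟩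
    rw [Nat.even_iff] at hc; omega

lemma ep_eo (m j : ℕ) : ep (2 * m) (2 * j + 1) =
    if 1 ≤ j ∧ 2 * j ≤ m then 2 ^ j * Nat.choose (m - j - 1) (j - 1) else 0 := by
  have heven : Even (2 * m) := ⟨m, by ring⟩
  have hodd : Odd (2 * j + 1) := ⟨j, rfl⟩
  by_cases h : 1 ≤ j ∧ 2 * j ≤ m
  · rw [ep, if_pos ⟨by omega, by omega, heven, hodd⟩, if_pos h]
    congr 2
    · omega
    · omega
    · omega
  · have hn1 : ¬(2 ≤ 2 * j + 1 ∧ 2 * j + 1 ≤ (2 * m + 2) / 2 ∧ Even (2 * m) ∧ Odd (2 * j + 1)) := by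
      rintro ⟨h1, h2, -, -⟩; omega
    have hn2 : ¬(2 ≤ 2 * j + 1 ∧ 2 * j + 1 ≤ (2 * m + 2) / 2 ∧ Odd (2 * m) ∧ Even (2 * j + 1)) := by
      rintro ⟨-, -, hc, -⟩; rw [Nat.odd_iff] at hc; omega
    rw [ep, if_neg hn1, if_neg hn2, if_neg h]

lemma ep_oe (m j : ℕ) : ep (2 * m + 1) (2 * j) =
    if 1 ≤ j ∧ 2 * j ≤ m + 1 then 2 ^ j * Nat.choose (m - j) (j - 1) else 0 := by
  have hodd : Odd (2 * m + 1) := ⟨m, rfl⟩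
  have heven : Even (2 * j) := ⟨j, by ring⟩
  have hn1 : ¬(2 ≤ 2 * j ∧ 2 * j ≤ (2 * m + 1 + 2) / 2 ∧ Even (2 * m + 1) ∧ Odd (2 * j)) := by
    rintro ⟨-, -, hc, -⟩; rw [Nat.even_iff] at hc; omega
  by_cases h : 1 ≤ j ∧ 2 * j ≤ m + 1
  · obtain ⟨ha, hb⟩ := h
    rw [ep, if_neg hn1, if_pos (show 2 ≤ 2 * j ∧ 2 * j ≤ (2 * m + 1 + 2) / 2 ∧
        Odd (2 * m + 1) ∧ Even (2 * j) from ⟨by omega, by omega, hodd, heven⟩),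
      if_pos (show 1 ≤ j ∧ 2 * j ≤ m + 1 from ⟨ha, hb⟩),
      show 2 * j / 2 = j from by omega,
      show (2 * m + 1 - 2 * j - 1) / 2 = m - j from by omega,
      show (2 * j - 2) / 2 = j - 1 from by omega]
  · have hn2 : ¬(2 ≤ 2 * j ∧ 2 * j ≤ (2 * m + 1 + 2) / 2 ∧ Odd (2 * m + 1) ∧ Even (2 * j)) := by
      rintro ⟨h1, h2, -, -⟩; omega
    rw [ep, if_neg hn1, if_neg hn2, if_neg h]

lemma pascal_key (n l : ℕ) :
    (n + l + 1).choose (l + 1) = (n + l).choose l + (n + l).choose (l + 1) :=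
  Nat.choose_succ_succ _ _

/-- The key Pascal-type recurrence for `ep`. -/
lemma ep_rec (c b : ℕ) (hc : 1 ≤ c) :
    ep (c + 4) b = ep (c + 2) b + 2 * ep c (b - 2) := by
  rcases Nat.even_or_odd c with hce | hco
  · -- c even
    obtain ⟨m, rfl⟩ : ∃ m, c = 2 * m := ⟨c / 2, by rw [Nat.even_iff] at hce; omega⟩
    have hm : 1 ≤ m := by omega
    have h4 : 2 * m + 4 = 2 * (m + 2) := by ring
    have h2 : 2 * m + 2 = 2 * (m + 1) := by ring
    rcases Nat.even_or_odd b with hbe | hbo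
    · -- b even : everything vanishes
      obtain ⟨j, rfl⟩ : ∃ j, b = 2 * j := ⟨b / 2, by rw [Nat.even_iff] at hbe; omega⟩
      have hb2 : 2 * j - 2 = 2 * (j - 1) := by omega
      rw [h4, h2, hb2, ep_ee, ep_ee, ep_ee]
    · obtain ⟨j, rfl⟩ : ∃ j, b = 2 * j + 1 := ⟨b / 2, by rw [Nat.odd_iff] at hbo; omega⟩
      rcases Nat.eq_zero_or_pos j with rfl | hj
      · -- b = 1
        rw [show 2 * 0 + 1 = 1 from rfl, show (1 : ℕ) - 2 = 0 from rfl,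
          ep_zero_of_lt (by omega), ep_zero_of_lt (by omega), ep_zero_of_lt (by omega)]
      · have hb2 : 2 * j + 1 - 2 = 2 * (j - 1) + 1 := by omega
        rw [h4, h2, hb2, ep_eo, ep_eo, ep_eo]
        by_cases hL : 2 * j ≤ m + 2
        · rcases Nat.lt_or_ge j 2 with hj1 | hj2
          · -- j = 1
            obtain rfl : j = 1 := by omega
            rw [if_pos ⟨by omega, by omega⟩, if_pos ⟨by omega, by omega⟩,
              if_neg (by rintro ⟨h', -⟩; omega)]
            norm_num
          · obtain ⟨l, rfl⟩ : ∃ l, j = l + 2 := ⟨j - 2, by omega⟩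
            obtain ⟨n, rfl⟩ : ∃ n, m = n + 2 * l + 2 := ⟨m - 2 * l - 2, by omega⟩
            rw [if_pos (show 1 ≤ l + 2 ∧ 2 * (l + 2) ≤ n + 2 * l + 2 + 2 from by omega),
              if_pos (show 1 ≤ l + 2 - 1 ∧ 2 * (l + 2 - 1) ≤ n + 2 * l + 2 from by omega),
              show l + 2 - 1 = l + 1 from rfl, show l + 1 - 1 = l from rfl,
              show n + 2 * l + 2 + 2 - (l + 2) - 1 = n + l + 1 from by omega,
              show n + 2 * l + 2 + 1 - (l + 2) - 1 = n + l from by omega,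
              show n + 2 * l + 2 - (l + 1) - 1 = n + l from by omega]
            by_cases hn : 1 ≤ n
            · rw [if_pos (show 1 ≤ l + 2 ∧ 2 * (l + 2) ≤ n + 2 * l + 2 + 1 from by omega),
                pascal_key, show l + 2 = l + 1 + 1 from rfl, pow_succ]
              ring
            · obtain rfl : n = 0 := by omega
              rw [if_neg (by rintro ⟨-, h'⟩; omega),
                show (0 : ℕ) + l + 1 = l + 1 from by omega, show (0 : ℕ) + l = l from by omega,
                Nat.choose_self, Nat.choose_self, show l + 2 = l + 1 + 1 from rfl, pow_succ]
              ring
        · rw [if_neg (by rintro ⟨-, h'⟩; omega), if_neg (by rintro ⟨-, h'⟩; omega),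
            if_neg (by rintro ⟨-, h'⟩; omega)]
  · -- c odd
    obtain ⟨m, rfl⟩ : ∃ m, c = 2 * m + 1 := ⟨c / 2, by rw [Nat.odd_iff] at hco; omega⟩
    have h4 : 2 * m + 1 + 4 = 2 * (m + 2) + 1 := by ring
    have h2 : 2 * m + 1 + 2 = 2 * (m + 1) + 1 := by ring
    rcases Nat.even_or_odd b with hbe | hbo
    · obtain ⟨j, rfl⟩ : ∃ j, b = 2 * j := ⟨b / 2, by rw [Nat.even_iff] at hbe; omega⟩
      rcases Nat.eq_zero_or_pos j with rfl | hj
      · rw [show 2 * 0 = 0 from rfl, show (0 : ℕ) - 2 = 0 from rfl,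
          ep_zero_of_lt (by omega), ep_zero_of_lt (by omega), ep_zero_of_lt (by omega)]
      · have hb2 : 2 * j - 2 = 2 * (j - 1) := by omega
        rw [h4, h2, hb2, ep_oe, ep_oe, ep_oe]
        by_cases hL : 2 * j ≤ m + 3
        · rcases Nat.lt_or_ge j 2 with hj1 | hj2
          · -- j = 1
            obtain rfl : j = 1 := by omega
            rw [if_pos ⟨by omega, by omega⟩, if_pos ⟨by omega, by omega⟩,
              if_neg (by rintro ⟨h', -⟩; omega)]
            norm_num
          · obtain ⟨l, rfl⟩ : ∃ l, j = l + 2 := ⟨j - 2, by omega⟩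
            obtain ⟨n, rfl⟩ : ∃ n, m = n + 2 * l + 1 := ⟨m - 2 * l - 1, by omega⟩
            rw [if_pos (show 1 ≤ l + 2 ∧ 2 * (l + 2) ≤ n + 2 * l + 1 + 2 + 1 from by omega),
              if_pos (show 1 ≤ l + 2 - 1 ∧ 2 * (l + 2 - 1) ≤ n + 2 * l + 1 + 1 from by omega),
              show l + 2 - 1 = l + 1 from rfl, show l + 1 - 1 = l from rfl,
              show n + 2 * l + 1 + 2 - (l + 2) = n + l + 1 from by omega,
              show n + 2 * l + 1 + 1 - (l + 2) = n + l from by omega,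
              show n + 2 * l + 1 - (l + 1) = n + l from by omega]
            by_cases hn : 1 ≤ n
            · rw [if_pos (show 1 ≤ l + 2 ∧ 2 * (l + 2) ≤ n + 2 * l + 1 + 1 + 1 from by omega),
                pascal_key, show l + 2 = l + 1 + 1 from rfl, pow_succ]
              ring
            · obtain rfl : n = 0 := by omega
              rw [if_neg (by rintro ⟨-, h'⟩; omega),
                show (0 : ℕ) + l + 1 = l + 1 from by omega, show (0 : ℕ) + l = l from by omega,
                Nat.choose_self, Nat.choose_self, show l + 2 = l + 1 + 1 from rfl, pow_succ]
              ring
        · rw [if_neg (by rintro ⟨-, h'⟩; omega), if_neg (by rintro ⟨-, h'⟩; omega),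
            if_neg (by rintro ⟨-, h'⟩; omega)]
    · obtain ⟨j, rfl⟩ : ∃ j, b = 2 * j + 1 := ⟨b / 2, by rw [Nat.odd_iff] at hbo; omega⟩
      rcases Nat.eq_zero_or_pos j with rfl | hj
      · rw [show 2 * 0 + 1 = 1 from rfl, show (1 : ℕ) - 2 = 0 from rfl,
          ep_zero_of_lt (by omega), ep_zero_of_lt (by omega), ep_zero_of_lt (by omega)]
      · have hb2 : 2 * j + 1 - 2 = 2 * (j - 1) + 1 := by omega
        rw [h4, h2, hb2, ep_oo, ep_oo, ep_oo]

/- ### Range reformulations and sum shifting -/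

lemma tbip_eq (c : ℕ) :
    tbip c = ∑ i ∈ Finset.range ((c + 2) / 2 - 1), (2 + i) * ep c (2 + i) := by
  rw [tbip, ← Finset.Ico_add_one_right_eq_Icc, Finset.sum_Ico_eq_sum_range,
    show (c + 2) / 2 + 1 - 2 = (c + 2) / 2 - 1 from by omega]

lemma epTot_eq (c : ℕ) :
    epTot c = ∑ i ∈ Finset.range ((c + 2) / 2 - 1), ep c (2 + i) := by
  rw [epTot, ← Finset.Ico_add_one_right_eq_Icc, Finset.sum_Ico_eq_sum_range,
    show (c + 2) / 2 + 1 - 2 = (c + 2) / 2 - 1 from by omega]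

lemma sum_shift2 (f : ℕ → ℕ) (n : ℕ) (h0 : f 0 = 0) (h1 : f 1 = 0) :
    ∑ i ∈ Finset.range (n + 2), f i = ∑ i ∈ Finset.range n, f (2 + i) := by
  rw [Finset.sum_range_succ', Finset.sum_range_succ']
  simp only [Nat.zero_add, h0, h1, add_zero]
  exact Finset.sum_congr rfl fun i _ => by congr 1; omega

lemma epTot_rec (k : ℕ) (hk : 1 ≤ k) : epTot (k + 4) = epTot (k + 2) + 2 * epTot k := by
  have e1 : (k + 4 + 2) / 2 - 1 = k / 2 + 2 := by omega
  have e2 : (k + 2 + 2) / 2 - 1 = k / 2 + 1 := by omega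
  have e3 : (k + 2) / 2 - 1 = k / 2 := by omega
  rw [epTot_eq, epTot_eq, epTot_eq, e1, e2, e3]
  have step : ∀ i ∈ Finset.range (k / 2 + 2),
      ep (k + 4) (2 + i) = ep (k + 2) (2 + i) + 2 * ep k i := by
    intro i _
    have h := ep_rec k (2 + i) hk
    rwa [show 2 + i - 2 = i from by omega] at h
  rw [Finset.sum_congr rfl step, Finset.sum_add_distrib]
  congr 1
  · rw [Finset.sum_range_succ, ep_zero_of_gt (by omega), add_zero]
  · rw [← Finset.mul_sum, sum_shift2 (fun i => ep k i) (k / 2)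
      (ep_zero_of_lt (by omega)) (ep_zero_of_lt (by omega))]

lemma tbip_rec (k : ℕ) (hk : 1 ≤ k) :
    tbip (k + 4) = tbip (k + 2) + 2 * tbip k + 4 * epTot k := by
  have e1 : (k + 4 + 2) / 2 - 1 = k / 2 + 2 := by omega
  have e2 : (k + 2 + 2) / 2 - 1 = k / 2 + 1 := by omega
  have e3 : (k + 2) / 2 - 1 = k / 2 := by omega
  rw [tbip_eq, tbip_eq, tbip_eq, epTot_eq, e1, e2, e3]
  have step : ∀ i ∈ Finset.range (k / 2 + 2),
      (2 + i) * ep (k + 4) (2 + i)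
        = (2 + i) * ep (k + 2) (2 + i) + 2 * ((2 + i) * ep k i) := by
    intro i _
    have h := ep_rec k (2 + i) hk
    rw [show 2 + i - 2 = i from by omega] at h
    rw [h]; ring
  rw [Finset.sum_congr rfl step, Finset.sum_add_distrib]
  have hA : ∑ i ∈ Finset.range (k / 2 + 2), (2 + i) * ep (k + 2) (2 + i)
      = ∑ i ∈ Finset.range (k / 2 + 1), (2 + i) * ep (k + 2) (2 + i) := by
    rw [Finset.sum_range_succ, ep_zero_of_gt (by omega), mul_zero, add_zero]
  have hB : ∑ i ∈ Finset.range (k / 2 + 2), 2 * ((2 + i) * ep k i)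
      = ∑ i ∈ Finset.range (k / 2), 2 * ((2 + (2 + i)) * ep k (2 + i)) :=
    sum_shift2 (fun i => 2 * ((2 + i) * ep k i)) (k / 2)
      (by show 2 * ((2 + 0) * ep k 0) = 0
          rw [ep_zero_of_lt (by omega)])
      (by show 2 * ((2 + 1) * ep k 1) = 0
          rw [ep_zero_of_lt (by omega)])
  rw [hA, hB]
  have hC : ∑ i ∈ Finset.range (k / 2), 2 * ((2 + (2 + i)) * ep k (2 + i))
      = 2 * ∑ i ∈ Finset.range (k / 2), (2 + i) * ep k (2 + i)
        + 4 * ∑ i ∈ Finset.range (k / 2), ep k (2 + i) := by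
    rw [Finset.mul_sum, Finset.mul_sum, ← Finset.sum_add_distrib]
    exact Finset.sum_congr rfl fun i _ => by ring
  rw [hC]
  ring

/- ### Closed forms -/

def eC (c : ℕ) : ℤ :=
  if Even c then 2 ^ (c / 2) + 2 * (-1) ^ (c / 2)
  else 2 ^ ((c - 1) / 2 + 1) - 2 * (-1) ^ ((c - 1) / 2)

def tC (c : ℕ) : ℤ :=
  if Even c then (3 * (c : ℤ) + 13) * 2 ^ (c / 2) + (12 * (c : ℤ) + 14) * (-1) ^ (c / 2)
  else (6 * (c : ℤ) + 14) * 2 ^ ((c - 1) / 2) - (12 * (c : ℤ) + 8) * (-1) ^ ((c - 1) / 2)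

lemma eC_rec (k : ℕ) (hk : 1 ≤ k) : eC (k + 4) = eC (k + 2) + 2 * eC k := by
  rcases Nat.even_or_odd k with h | h
  · have h2 : Even (k + 2) := h.add even_two
    have h4 : Even (k + 4) := h.add ⟨2, rfl⟩
    rw [eC, eC, eC, if_pos h, if_pos h2, if_pos h4,
      show (k + 4) / 2 = k / 2 + 2 from by omega, show (k + 2) / 2 = k / 2 + 1 from by omega]
    ring
  · have hko : k % 2 = 1 := Nat.odd_iff.mp h
    have h2 : ¬Even (k + 2) := by rw [Nat.even_iff]; omega
    have h4 : ¬Even (k + 4) := by rw [Nat.even_iff]; omega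
    have hne : ¬Even k := by rw [Nat.even_iff]; omega
    rw [eC, eC, eC, if_neg hne, if_neg h2, if_neg h4,
      show (k + 4 - 1) / 2 = (k - 1) / 2 + 2 from by omega,
      show (k + 2 - 1) / 2 = (k - 1) / 2 + 1 from by omega]
    ring

lemma tC_rec (k : ℕ) (hk : 1 ≤ k) : tC (k + 4) = tC (k + 2) + 2 * tC k + 36 * eC k := by
  rcases Nat.even_or_odd k with h | h
  · have h2 : Even (k + 2) := h.add even_two
    have h4 : Even (k + 4) := h.add ⟨2, rfl⟩
    rw [tC, tC, tC, eC, if_pos h, if_pos h, if_pos h2, if_pos h4,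
      show (k + 4) / 2 = k / 2 + 2 from by omega, show (k + 2) / 2 = k / 2 + 1 from by omega]
    push_cast
    ring
  · have hko : k % 2 = 1 := Nat.odd_iff.mp h
    have h2 : ¬Even (k + 2) := by rw [Nat.even_iff]; omega
    have h4 : ¬Even (k + 4) := by rw [Nat.even_iff]; omega
    have hne : ¬Even k := by rw [Nat.even_iff]; omega
    rw [tC, tC, tC, eC, if_neg hne, if_neg hne, if_neg h2, if_neg h4,
      show (k + 4 - 1) / 2 = (k - 1) / 2 + 2 from by omega,
      show (k + 2 - 1) / 2 = (k - 1) / 2 + 1 from by omega]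
    push_cast
    ring

/- ### Base values -/

lemma ep32 : ep 3 2 = 2 := by have h := ep_oe 1 1; norm_num at h; exact h
lemma ep42 : ep 4 2 = 0 := ep_ee 2 1
lemma ep43 : ep 4 3 = 2 := by have h := ep_eo 2 1; norm_num at h; exact h
lemma ep52 : ep 5 2 = 2 := by have h := ep_oe 2 1; norm_num at h; exact h
lemma ep53 : ep 5 3 = 0 := ep_oo 2 1
lemma ep62 : ep 6 2 = 0 := ep_ee 3 1
lemma ep63 : ep 6 3 = 2 := by have h := ep_eo 3 1; norm_num at h; exact h
lemma ep64 : ep 6 4 = 0 := ep_ee 3 2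

lemma epTot3 : epTot 3 = 2 := by
  have h : epTot 3 = ∑ b ∈ Finset.Icc 2 2, ep 3 b := rfl
  rw [h, Finset.Icc_self, Finset.sum_singleton, ep32]

lemma epTot4 : epTot 4 = 2 := by
  have h : epTot 4 = ∑ b ∈ Finset.Icc 2 3, ep 4 b := rfl
  rw [h, show Finset.Icc 2 3 = {2, 3} from by decide,
    Finset.sum_insert (by decide), Finset.sum_singleton, ep42, ep43]

lemma epTot5 : epTot 5 = 2 := by
  have h : epTot 5 = ∑ b ∈ Finset.Icc 2 3, ep 5 b := rfl
  rw [h, show Finset.Icc 2 3 = {2, 3} from by decide,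
    Finset.sum_insert (by decide), Finset.sum_singleton, ep52, ep53]

lemma epTot6 : epTot 6 = 2 := by
  have h : epTot 6 = ∑ b ∈ Finset.Icc 2 4, ep 6 b := rfl
  rw [h, show Finset.Icc 2 4 = {2, 3, 4} from by decide,
    Finset.sum_insert (by decide), Finset.sum_insert (by decide), Finset.sum_singleton,
    ep62, ep63, ep64]
  norm_num

lemma tbip3 : tbip 3 = 4 := by
  have h : tbip 3 = ∑ b ∈ Finset.Icc 2 2, b * ep 3 b := rfl
  rw [h, Finset.Icc_self, Finset.sum_singleton, ep32]

lemma tbip4 : tbip 4 = 6 := by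
  have h : tbip 4 = ∑ b ∈ Finset.Icc 2 3, b * ep 4 b := rfl
  rw [h, show Finset.Icc 2 3 = {2, 3} from by decide,
    Finset.sum_insert (by decide), Finset.sum_singleton, ep42, ep43]

lemma tbip5 : tbip 5 = 4 := by
  have h : tbip 5 = ∑ b ∈ Finset.Icc 2 3, b * ep 5 b := rfl
  rw [h, show Finset.Icc 2 3 = {2, 3} from by decide,
    Finset.sum_insert (by decide), Finset.sum_singleton, ep52, ep53]

lemma tbip6 : tbip 6 = 6 := by
  have h : tbip 6 = ∑ b ∈ Finset.Icc 2 4, b * ep 6 b := rfl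
  rw [h, show Finset.Icc 2 4 = {2, 3, 4} from by decide,
    Finset.sum_insert (by decide), Finset.sum_insert (by decide), Finset.sum_singleton,
    ep62, ep63, ep64]
  norm_num

/- ### The closed formula by strong induction -/

lemma closed_formula : ∀ c : ℕ, 3 ≤ c →
    (3 : ℤ) * epTot c = eC c ∧ (27 : ℤ) * tbip c = tC c := by
  intro c
  induction c using Nat.strong_induction_on with
  | _ c ih =>
    intro hc
    by_cases h7 : c < 7
    · interval_cases c
      · exact ⟨by rw [epTot3]; norm_num [eC, Nat.even_iff], by rw [tbip3]; norm_num [tC, Nat.even_iff]⟩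
      · exact ⟨by rw [epTot4]; norm_num [eC, Nat.even_iff], by rw [tbip4]; norm_num [tC, Nat.even_iff]⟩
      · exact ⟨by rw [epTot5]; norm_num [eC, Nat.even_iff], by rw [tbip5]; norm_num [tC, Nat.even_iff]⟩
      · exact ⟨by rw [epTot6]; norm_num [eC, Nat.even_iff], by rw [tbip6]; norm_num [tC, Nat.even_iff]⟩
    · obtain ⟨k, rfl, hk3⟩ : ∃ k, c = k + 4 ∧ 3 ≤ k := ⟨c - 4, by omega, by omega⟩
      obtain ⟨hE2, hT2⟩ := ih (k + 2) (by omega) (by omega)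
      obtain ⟨hE0, hT0⟩ := ih k (by omega) (by omega)
      constructor
      · rw [epTot_rec k (by omega), eC_rec k (by omega), ← hE2, ← hE0]
        push_cast
        ring
      · rw [tbip_rec k (by omega), tC_rec k (by omega), ← hT2, ← hT0, ← hE0]
        push_cast
        ring

theorem tbip_recursion_and_closed_formula :
    (∀ c : ℕ, 7 ≤ c →
      tbip c = tbip (c - 2) + 2 * tbip (c - 4) + 4 * epTot (c - 4)) ∧
    (∀ c : ℕ, 3 ≤ c →
      (27 : ℤ) * tbip c =
        if Even c then
          (3 * (c : ℤ) + 13) * 2 ^ (c / 2) + (12 * (c : ℤ) + 14) * (-1) ^ (c / 2)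
        else
          (6 * (c : ℤ) + 14) * 2 ^ ((c - 1) / 2) - (12 * (c : ℤ) + 8) * (-1) ^ ((c - 1) / 2)) := by
  constructor
  · intro c hc
    obtain ⟨k, rfl⟩ : ∃ k, c = k + 4 := ⟨c - 4, by omega⟩
    rw [show k + 4 - 2 = k + 2 from by omega, show k + 4 - 4 = k from by omega]
    exact tbip_rec k (by omega)
  · intro c hc
    rw [(closed_formula c hc).2, tC]
end

section
/- Define tbi²(c) = Σ_b b²·e(c,b). For c ≥ 6, tbi²(c) = 3·tbi²(c−2) + 2·tbi²(c−3) + ((6c+17)·2^{c−3} + 8·(−1)^c)/9, and for c ≥ 3, tbi²(c) = ((3c²+24c+37)·2^{c−1} + (12c²+30c−302)·(−1)^c)/81. -/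
open Finset in
/-- Auxiliary weighted Jacobsthal-type sum. -/
def Sw (w : ℕ → ℕ) (n : ℕ) : ℕ := ∑ k ∈ range (n+1), w k * ((n-k).choose k) * 2^k

open Finset in
/-- Companion sum with shifted lower binomial index. -/
def Tw (w : ℕ → ℕ) (n : ℕ) : ℕ := ∑ k ∈ range (n+1), w k * ((n-k).choose (k+1)) * 2^k

lemma Sw_shift (w : ℕ → ℕ) (n : ℕ) :
    Sw w (n+1) = 2 * Tw (fun k => w (k+1)) n + w 0 := by
  unfold Sw Tw
  rw [Finset.sum_range_succ', Finset.mul_sum]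
  simp only [Nat.succ_sub_succ, Nat.sub_zero, Nat.choose_zero_right, mul_one, pow_zero]
  congr 1
  apply Finset.sum_congr rfl
  intro k _
  ring

lemma Tw_succ (w : ℕ → ℕ) (n : ℕ) : Tw w (n+1) = Sw w n + Tw w n := by
  unfold Tw Sw
  rw [Finset.sum_range_succ]
  have h0 : (n+1-(n+1)).choose (n+1+1) = 0 := by simp
  rw [h0, mul_zero, zero_mul, add_zero, ← Finset.sum_add_distrib]
  apply Finset.sum_congr rfl
  intro k hk
  rw [Finset.mem_range] at hk
  have h1 : n+1-k = (n-k)+1 := by omega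
  rw [h1, Nat.choose_succ_succ]
  ring

lemma Sw_rec (w : ℕ → ℕ) (n : ℕ) :
    Sw w (n+2) = Sw w (n+1) + 2 * Sw (fun k => w (k+1)) n := by
  rw [Sw_shift w (n+1), Tw_succ, Sw_shift w n]
  ring

/-- `An n = ∑ C(n-k,k) 2^k`. -/
def An (n : ℕ) : ℕ := Sw (fun _ => 1) n
/-- `Bn n = ∑ k C(n-k,k) 2^k`. -/
def Bn (n : ℕ) : ℕ := Sw (fun k => k) n
/-- `Dn n = ∑ k² C(n-k,k) 2^k`. -/
def Dn (n : ℕ) : ℕ := Sw (fun k => k^2) n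

lemma Sw_lin1 (n : ℕ) : Sw (fun k => k+1) n = Bn n + An n := by
  unfold Sw Bn An Sw
  rw [← Finset.sum_add_distrib]
  exact Finset.sum_congr rfl fun k _ => by ring

lemma Sw_lin2 (n : ℕ) : Sw (fun k => (k+1)^2) n = Dn n + 2 * Bn n + An n := by
  unfold Sw Dn Bn An Sw
  rw [Finset.mul_sum, ← Finset.sum_add_distrib, ← Finset.sum_add_distrib]
  exact Finset.sum_congr rfl fun k _ => by ring

lemma Sw_lin3 (n : ℕ) : Sw (fun k => (k+2)^2) n = Dn n + 4 * Bn n + 4 * An n := by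
  unfold Sw Dn Bn An Sw
  rw [Finset.mul_sum, Finset.mul_sum, ← Finset.sum_add_distrib, ← Finset.sum_add_distrib]
  exact Finset.sum_congr rfl fun k _ => by ring

lemma An_rec (n : ℕ) : An (n+2) = An (n+1) + 2 * An n := Sw_rec _ n

lemma Bn_rec (n : ℕ) : Bn (n+2) = Bn (n+1) + 2 * Bn n + 2 * An n := by
  have h := Sw_rec (fun k => k) n
  rw [Sw_lin1] at h
  unfold Bn at h ⊢
  omega

lemma Dn_rec (n : ℕ) : Dn (n+2) = Dn (n+1) + 2 * Dn n + 4 * Bn n + 2 * An n := by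
  have h := Sw_rec (fun k => k^2) n
  rw [Sw_lin2] at h
  unfold Dn at h ⊢
  omega

lemma ABD_closed (n : ℕ) :
    ((An n : ℚ) = (2^(n+1) + (-1)^n)/3) ∧
    ((Bn n : ℚ) = ((6*n-2)*2^n + (6*n+2)*(-1)^n)/27) ∧
    ((Dn n : ℚ) = ((6*n^2+2)*2^n + (12*n^2+6*n-2)*(-1)^n)/81) := by
  induction n using Nat.twoStepInduction with
  | zero => norm_num [An, Bn, Dn, Sw]
  | one => norm_num [An, Bn, Dn, Sw, Finset.sum_range_succ]
  | more n ih1 ih2 =>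
    obtain ⟨hA1, hB1, hD1⟩ := ih1
    obtain ⟨hA2, hB2, hD2⟩ := ih2
    refine ⟨?_, ?_, ?_⟩
    · have h : (An (n+2) : ℚ) = (An (n+1) : ℚ) + 2 * An n := by
        rw [An_rec]; push_cast; ring
      rw [h, hA1, hA2]
      simp only [pow_succ]
      ring
    · have h : (Bn (n+2) : ℚ) = (Bn (n+1) : ℚ) + 2 * Bn n + 2 * An n := by
        rw [Bn_rec]; push_cast; ring
      rw [h, hA1, hB1, hB2]
      simp only [pow_succ]
      push_cast
      ring
    · have h : (Dn (n+2) : ℚ) = (Dn (n+1) : ℚ) + 2 * Dn n + 4 * Bn n + 2 * An n := by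
        rw [Dn_rec]; push_cast; ring
      rw [h, hA1, hB1, hD1, hD2]
      simp only [pow_succ]
      push_cast
      ring

/-- The total square braid index. -/
noncomputable def tbi2 (c : ℕ) : ℕ := ∑ b ∈ Finset.Icc 2 ((c + 2) / 2), b ^ 2 * e c b

lemma tbi2_eq (c : ℕ) (hc : 3 ≤ c) :
    tbi2 c + 4 = Dn (c-2) + 4 * Bn (c-2) + 4 * An (c-2) + (if Odd c then 8 else 0) := by
  have hm2 : 2 ≤ (c+2)/2 := by omega
  set m := (c+2)/2 with hm
  have hsplit : Finset.Icc 2 m = insert 2 (Finset.Icc 3 m) := by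
    ext x; simp only [Finset.mem_Icc, Finset.mem_insert]; omega
  have he2 : e c 2 = if Odd c then 2 else 0 := by
    by_cases h : Odd c <;> simp [e, hc, h]
  have hterm : ∀ b ∈ Finset.Icc 3 m,
      b^2 * e c b = (b)^2 * Nat.choose (c-2-(b-2)) (b-2) * 2^(b-2) := by
    intro b hb
    rw [Finset.mem_Icc] at hb
    have h1 : ¬ (3 ≤ c ∧ Odd c ∧ b = 2) := by rintro ⟨-, -, rfl⟩; omega
    have h2 : 3 ≤ c ∧ 3 ≤ b ∧ b ≤ m := ⟨hc, hb.1, hb.2⟩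
    rw [e, if_neg h1, if_pos h2]
    have : c - 2 - (b - 2) = c - b := by omega
    rw [this]; ring
  have hmap : Finset.Icc 3 m = (Finset.Icc 1 (m-2)).map ⟨(· + 2), add_left_injective 2⟩ := by
    ext x
    simp only [Finset.mem_Icc, Finset.mem_map, Function.Embedding.coeFn_mk]
    constructor
    · intro h; exact ⟨x - 2, by omega, by omega⟩
    · rintro ⟨a, ha, rfl⟩; omega
  have key : ∑ b ∈ Finset.Icc 3 m, b^2 * e c b
      = ∑ k ∈ Finset.Icc 1 (m-2), (k+2)^2 * Nat.choose (c-2-k) k * 2^k := by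
    rw [Finset.sum_congr rfl hterm, hmap, Finset.sum_map]
    simp only [Function.Embedding.coeFn_mk, Nat.add_sub_cancel]
  have hSw : Sw (fun k => (k+2)^2) (c-2)
      = 4 + ∑ k ∈ Finset.Icc 1 (m-2), (k+2)^2 * Nat.choose (c-2-k) k * 2^k := by
    unfold Sw
    have hr : Finset.range (c-2+1) = insert 0 (Finset.Icc 1 (c-2)) := by
      ext x; simp only [Finset.mem_range, Finset.mem_insert, Finset.mem_Icc]; omega
    rw [hr, Finset.sum_insert (by simp)]
    simp only [Nat.sub_zero, Nat.choose_zero_right, pow_zero, mul_one]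
    congr 1
    rw [← Finset.sum_subset (Finset.Icc_subset_Icc_right (by omega : m-2 ≤ c-2))]
    intro k hk hk2
    rw [Finset.mem_Icc] at hk
    rw [Finset.mem_Icc] at hk2
    have : c - 2 - k < k := by omega
    rw [Nat.choose_eq_zero_of_lt this, mul_zero, zero_mul]
  rw [tbi2, hsplit, Finset.sum_insert (by simp), he2, key]
  rw [Sw_lin3] at hSw
  by_cases h : Odd c <;> simp [h] <;> omega

lemma tbi2_closed (c : ℕ) (hc : 3 ≤ c) :
    (tbi2 c : ℚ) = ((3 * (c : ℚ) ^ 2 + 24 * c + 37) * 2 ^ (c - 1)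
      + (12 * (c : ℚ) ^ 2 + 30 * c - 302) * (-1 : ℚ) ^ c) / 81 := by
  obtain ⟨n, rfl⟩ : ∃ n, c = n+3 := ⟨c-3, by omega⟩
  have h := tbi2_eq (n+3) (by omega)
  rw [show n+3-2 = n+1 from rfl] at h
  obtain ⟨hA, hB, hD⟩ := ABD_closed (n+1)
  rw [show n+3-1 = n+2 from rfl]
  rcases Nat.even_or_odd n with hpar | hpar
  · have hodd : Odd (n+3) := by
      rw [Nat.even_iff] at hpar; rw [Nat.odd_iff]; omega
    rw [if_pos hodd] at h
    have hq : (tbi2 (n+3) : ℚ)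
        = (Dn (n+1) : ℚ) + 4*(Bn (n+1) : ℚ) + 4*(An (n+1) : ℚ) + 8 - 4 := by
      have h' : ((tbi2 (n+3) + 4 : ℕ) : ℚ)
          = ((Dn (n+1) + 4 * Bn (n+1) + 4 * An (n+1) + 8 : ℕ) : ℚ) := by
        exact_mod_cast congrArg (fun x : ℕ => (x : ℚ)) h
      push_cast at h'
      linarith
    have e1 : ((-1 : ℚ))^n = 1 := hpar.neg_one_pow
    rw [hq, hA, hB, hD]
    simp only [pow_succ]
    rw [e1]
    push_cast
    ring
  · have hodd : ¬ Odd (n+3) := by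
      rw [Nat.odd_iff] at hpar ⊢; omega
    rw [if_neg hodd] at h
    have hq : (tbi2 (n+3) : ℚ)
        = (Dn (n+1) : ℚ) + 4*(Bn (n+1) : ℚ) + 4*(An (n+1) : ℚ) + 0 - 4 := by
      have h' : ((tbi2 (n+3) + 4 : ℕ) : ℚ)
          = ((Dn (n+1) + 4 * Bn (n+1) + 4 * An (n+1) + 0 : ℕ) : ℚ) := by
        exact_mod_cast congrArg (fun x : ℕ => (x : ℚ)) h
      push_cast at h'
      linarith
    have e1 : ((-1 : ℚ))^n = -1 := hpar.neg_one_pow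
    rw [hq, hA, hB, hD]
    simp only [pow_succ]
    rw [e1]
    push_cast
    ring

theorem tbi2_recursion_and_closed_formula :
    (∀ c : ℕ, 6 ≤ c →
      (tbi2 c : ℚ) = 3 * tbi2 (c - 2) + 2 * tbi2 (c - 3)
        + ((6 * (c : ℚ) + 17) * 2 ^ (c - 3) + 8 * (-1 : ℚ) ^ c) / 9) ∧
    (∀ c : ℕ, 3 ≤ c →
      (tbi2 c : ℚ) = ((3 * (c : ℚ) ^ 2 + 24 * c + 37) * 2 ^ (c - 1)
        + (12 * (c : ℚ) ^ 2 + 30 * c - 302) * (-1 : ℚ) ^ c) / 81) := by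
  constructor
  · intro c hc
    obtain ⟨m, rfl⟩ : ∃ m, c = m+6 := ⟨c-6, by omega⟩
    rw [show m+6-2 = m+4 from rfl, show m+6-3 = m+3 from rfl]
    rw [tbi2_closed (m+6) (by omega), tbi2_closed (m+4) (by omega),
      tbi2_closed (m+3) (by omega)]
    rw [show m+6-1 = m+5 from rfl, show m+4-1 = m+3 from rfl, show m+3-1 = m+2 from rfl]
    rcases Nat.even_or_odd m with hpar | hpar
    · have e1 : ((-1 : ℚ))^m = 1 := hpar.neg_one_pow
      simp only [pow_succ]
      rw [e1]
      push_cast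
      ring
    · have e1 : ((-1 : ℚ))^m = -1 := hpar.neg_one_pow
      simp only [pow_succ]
      rw [e1]
      push_cast
      ring
  · exact tbi2_closed
end

section
/- Define tbi_p²(c) = Σ_b b²·e_p(c,b). For c ≥ 3, tbi_p²(c) equals ((6c²+36c+14)·2^{(c−1)/2} − (24c²+24c+8)·(−1)^{(c−1)/2})/81 if c is odd, and ((3c²+30c+43)·2^{c/2} + (24c²+48c+38)·(−1)^{c/2})/81 if c is even. -/
/-- The total palindromic square braid index. -/
noncomputable def tbip2 (c : ℕ) : ℕ := ∑ b ∈ Finset.Icc 2 ((c + 2) / 2), b ^ 2 * ep c b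

/-- Diagonal binomial coefficient. -/
def gd (n i : ℕ) : ℕ := (n - i).choose i

lemma gd_zero {n i : ℕ} (h1 : 1 ≤ i) (h2 : n < 2 * i) : gd n i = 0 :=
  Nat.choose_eq_zero_of_lt (by omega)

lemma gd_pascal (n i : ℕ) : gd (n + 2) (i + 1) = gd (n + 1) (i + 1) + gd n i := by
  unfold gd
  rcases le_or_gt i n with h | h
  · have h1 : n + 2 - (i + 1) = (n - i) + 1 := by omega
    have h2 : n + 1 - (i + 1) = n - i := by omega
    rw [h1, h2, Nat.choose_succ_succ]
    ring
  · rw [Nat.choose_eq_zero_of_lt (by omega), Nat.choose_eq_zero_of_lt (by omega),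
      Nat.choose_eq_zero_of_lt (by omega)]

/-- Weighted diagonal sums. -/
def SS (r n : ℕ) : ℕ := ∑ i ∈ Finset.range (n + 1), i ^ r * 2 ^ i * gd n i

lemma SS_ext (r n N : ℕ) (h : n + 1 ≤ N) :
    ∑ i ∈ Finset.range N, i ^ r * 2 ^ i * gd n i = SS r n := by
  rw [SS]
  symm
  apply Finset.sum_subset (Finset.range_subset_range.mpr h)
  intro x hx hx2
  simp only [Finset.mem_range] at hx hx2
  rw [gd_zero (by omega) (by omega), mul_zero]

lemma SS_rec (r n : ℕ) :
    SS r (n + 2) = SS r (n + 1) + 2 * ∑ i ∈ Finset.range (n + 2), (i + 1) ^ r * 2 ^ i * gd n i := by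
  have key : SS r (n + 2)
      = (∑ i ∈ Finset.range (n + 2), (i + 1) ^ r * 2 ^ (i + 1) * gd (n + 2) (i + 1))
        + 0 ^ r * 2 ^ 0 * gd (n + 2) 0 := by
    rw [SS]
    exact Finset.sum_range_succ' (fun i => i ^ r * 2 ^ i * gd (n + 2) i) (n + 2)
  have key2 : SS r (n + 1)
      = (∑ i ∈ Finset.range (n + 2), (i + 1) ^ r * 2 ^ (i + 1) * gd (n + 1) (i + 1))
        + 0 ^ r * 2 ^ 0 * gd (n + 1) 0 := by
    rw [← SS_ext r (n + 1) (n + 3) (by omega)]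
    exact Finset.sum_range_succ' (fun i => i ^ r * 2 ^ i * gd (n + 1) i) (n + 2)
  have step : ∀ i ∈ Finset.range (n + 2), (i + 1) ^ r * 2 ^ (i + 1) * gd (n + 2) (i + 1)
      = (i + 1) ^ r * 2 ^ (i + 1) * gd (n + 1) (i + 1) + 2 * ((i + 1) ^ r * 2 ^ i * gd n i) := by
    intro i _
    rw [gd_pascal]
    ring
  rw [key, Finset.sum_congr rfl step, Finset.sum_add_distrib, ← Finset.mul_sum, key2]
  have hg1 : gd (n + 2) 0 = 1 := by simp [gd]
  have hg2 : gd (n + 1) 0 = 1 := by simp [gd]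
  rw [hg1, hg2]
  ring

lemma sum_poly_split (n N : ℕ) (h : n + 1 ≤ N) (a b c : ℕ) :
    ∑ i ∈ Finset.range N, (a * i ^ 2 + b * i + c) * 2 ^ i * gd n i
      = a * SS 2 n + b * SS 1 n + c * SS 0 n := by
  rw [← SS_ext 2 n N h, ← SS_ext 1 n N h, ← SS_ext 0 n N h, Finset.mul_sum, Finset.mul_sum,
    Finset.mul_sum, ← Finset.sum_add_distrib, ← Finset.sum_add_distrib]
  apply Finset.sum_congr rfl
  intro i _
  ring

lemma SS0_rec (n : ℕ) : SS 0 (n + 2) = SS 0 (n + 1) + 2 * SS 0 n := by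
  rw [SS_rec]
  congr 1
  have : ∀ i ∈ Finset.range (n + 2), (i + 1) ^ 0 * 2 ^ i * gd n i
      = (0 * i ^ 2 + 0 * i + 1) * 2 ^ i * gd n i := by intro i _; ring
  rw [Finset.sum_congr rfl this, sum_poly_split n (n + 2) (by omega)]
  ring

lemma SS1_rec (n : ℕ) : SS 1 (n + 2) = SS 1 (n + 1) + 2 * (SS 1 n + SS 0 n) := by
  rw [SS_rec]
  congr 1
  have : ∀ i ∈ Finset.range (n + 2), (i + 1) ^ 1 * 2 ^ i * gd n i
      = (0 * i ^ 2 + 1 * i + 1) * 2 ^ i * gd n i := by intro i _; ring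
  rw [Finset.sum_congr rfl this, sum_poly_split n (n + 2) (by omega)]
  ring

lemma SS2_rec (n : ℕ) : SS 2 (n + 2) = SS 2 (n + 1) + 2 * (SS 2 n + 2 * SS 1 n + SS 0 n) := by
  rw [SS_rec]
  congr 1
  have : ∀ i ∈ Finset.range (n + 2), (i + 1) ^ 2 * 2 ^ i * gd n i
      = (1 * i ^ 2 + 2 * i + 1) * 2 ^ i * gd n i := by intro i _; ring
  rw [Finset.sum_congr rfl this, sum_poly_split n (n + 2) (by omega)]
  ring

def Pc (m : ℕ) : Prop :=
  (81 * (SS 0 m : ℚ) = 54 * 2 ^ m + 27 * (-1 : ℚ) ^ m)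
  ∧ (81 * (SS 1 m : ℚ) = (18 * m - 6) * 2 ^ m + (18 * m + 6) * (-1 : ℚ) ^ m)
  ∧ (81 * (SS 2 m : ℚ)
      = (6 * m ^ 2 + 2) * 2 ^ m + (12 * m ^ 2 + 6 * m - 2) * (-1 : ℚ) ^ m)

lemma Pc_all : ∀ m : ℕ, Pc m ∧ Pc (m + 1) := by
  intro m
  induction m with
  | zero =>
    have e00 : SS 0 0 = 1 := by decide
    have e10 : SS 1 0 = 0 := by decide
    have e20 : SS 2 0 = 0 := by decide
    have e01 : SS 0 1 = 1 := by decide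
    have e11 : SS 1 1 = 0 := by decide
    have e21 : SS 2 1 = 0 := by decide
    constructor <;> refine ⟨?_, ?_, ?_⟩ <;>
      simp [e00, e10, e20, e01, e11, e21] <;> norm_num
  | succ k ih =>
    obtain ⟨⟨a0, a1, a2⟩, b0, b1, b2⟩ := ih
    refine ⟨⟨b0, b1, b2⟩, ?_, ?_, ?_⟩
    · rw [SS0_rec]
      push_cast
      push_cast at a0 b0
      linear_combination b0 + 2 * a0
    · rw [SS1_rec]
      push_cast
      push_cast at a0 a1 b1
      linear_combination b1 + 2 * a1 + 2 * a0
    · rw [SS2_rec]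
      push_cast
      push_cast at a0 a1 a2 b2
      linear_combination b2 + 2 * a2 + 4 * a1 + 2 * a0

lemma SS_closed (n : ℕ) :
    (81 * (SS 0 n : ℚ) = 54 * 2 ^ n + 27 * (-1 : ℚ) ^ n)
    ∧ (81 * (SS 1 n : ℚ) = (18 * n - 6) * 2 ^ n + (18 * n + 6) * (-1 : ℚ) ^ n)
    ∧ (81 * (SS 2 n : ℚ)
        = (6 * n ^ 2 + 2) * 2 ^ n + (12 * n ^ 2 + 6 * n - 2) * (-1 : ℚ) ^ n) :=
  (Pc_all n).1

lemma ep_zero_of_out {c b : ℕ} (h : b < 2 ∨ (c + 2) / 2 < b) : ep c b = 0 := by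
  unfold ep
  split_ifs with h1 h2
  · exfalso; obtain ⟨u, v, -⟩ := h1; omega
  · exfalso; obtain ⟨u, v, -⟩ := h2; omega
  · rfl

lemma ep_odd_odd {c b : ℕ} (hc : c % 2 = 1) (hb : b % 2 = 1) : ep c b = 0 := by
  unfold ep
  split_ifs with h1 h2
  · exfalso; have := h1.2.2.1; rw [Nat.even_iff] at this; omega
  · exfalso; have := h2.2.2.2; rw [Nat.even_iff] at this; omega
  · rfl

lemma ep_even_even {c b : ℕ} (hc : c % 2 = 0) (hb : b % 2 = 0) : ep c b = 0 := by
  unfold ep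
  split_ifs with h1 h2
  · exfalso; have := h1.2.2.2; rw [Nat.odd_iff] at this; omega
  · exfalso; have := h2.2.2.1; rw [Nat.odd_iff] at this; omega
  · rfl

lemma ep_odd_val (k i : ℕ) (h1 : 1 ≤ i) (h2 : 2 * i ≤ k + 2) :
    ep (2 * k + 3) (2 * i) = 2 ^ i * gd k (i - 1) := by
  unfold ep
  rw [if_neg, if_pos]
  · have e1 : 2 * i / 2 = i := by omega
    have e2 : (2 * k + 3 - 2 * i - 1) / 2 = k - (i - 1) := by omega
    have e3 : (2 * i - 2) / 2 = i - 1 := by omega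
    rw [e1, e2, e3]
    rfl
  · exact ⟨by omega, by omega, ⟨k + 1, by ring⟩, ⟨i, by ring⟩⟩
  · rintro ⟨-, -, hev, -⟩
    rw [Nat.even_iff] at hev
    omega

lemma ep_even_val (k i : ℕ) (h1 : 1 ≤ i) (h2 : 2 * i + 1 ≤ k + 3) :
    ep (2 * k + 4) (2 * i + 1) = 2 ^ i * gd k (i - 1) := by
  unfold ep
  rw [if_pos]
  · have e1 : (2 * i + 1 - 1) / 2 = i := by omega
    have e2 : (2 * k + 4 - (2 * i + 1) - 1) / 2 = k - (i - 1) := by omega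
    have e3 : (2 * i + 1 - 3) / 2 = i - 1 := by omega
    rw [e1, e2, e3]
    rfl
  · exact ⟨by omega, by omega, ⟨k + 2, by ring⟩, ⟨i, by ring⟩⟩

lemma sum_double {M : Type*} [AddCommMonoid M] (f : ℕ → M) (n : ℕ) :
    ∑ i ∈ Finset.range (2 * n), f i = ∑ i ∈ Finset.range n, (f (2 * i) + f (2 * i + 1)) := by
  induction n with
  | zero => simp
  | succ k ih =>
    have h : 2 * (k + 1) = 2 * k + 1 + 1 := by ring
    rw [h, Finset.sum_range_succ, Finset.sum_range_succ, Finset.sum_range_succ, ih, add_assoc]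

lemma tbip2_odd (k : ℕ) :
    tbip2 (2 * k + 3) = 8 * SS 2 k + 16 * SS 1 k + 8 * SS 0 k := by
  rw [tbip2]
  have hdiv : (2 * k + 3 + 2) / 2 = k + 2 := by omega
  rw [hdiv]
  rw [Finset.sum_subset
      (show Finset.Icc 2 (k + 2) ⊆ Finset.range (2 * (k + 3)) by
        intro x hx
        simp only [Finset.mem_Icc] at hx
        simp only [Finset.mem_range]
        omega)
      (fun x _ hx2 => by
        simp only [Finset.mem_Icc, not_and_or, not_le] at hx2
        rw [ep_zero_of_out (show x < 2 ∨ (2 * k + 3 + 2) / 2 < x by omega), mul_zero])]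
  rw [sum_double]
  have hsplit : ∀ i ∈ Finset.range (k + 3),
      (2 * i) ^ 2 * ep (2 * k + 3) (2 * i) + (2 * i + 1) ^ 2 * ep (2 * k + 3) (2 * i + 1)
        = (2 * i) ^ 2 * (2 ^ i * gd k (i - 1)) := by
    intro i _
    rw [show ep (2 * k + 3) (2 * i + 1) = 0 from ep_odd_odd (by omega) (by omega),
      mul_zero, add_zero]
    rcases Nat.eq_zero_or_pos i with rfl | hi
    · simp
    rcases le_or_gt (2 * i) (k + 2) with h | h
    · rw [ep_odd_val k i hi h]
    · rw [ep_zero_of_out (Or.inr (show (2 * k + 3 + 2) / 2 < 2 * i by omega)),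
        gd_zero (by omega) (by omega)]
      simp
  rw [Finset.sum_congr rfl hsplit, Finset.sum_range_succ']
  have hsh : ∀ i ∈ Finset.range (k + 2),
      (2 * (i + 1)) ^ 2 * (2 ^ (i + 1) * gd k (i + 1 - 1))
        = (8 * i ^ 2 + 16 * i + 8) * 2 ^ i * gd k i := by
    intro i _
    have : i + 1 - 1 = i := rfl
    rw [this]
    ring
  rw [Finset.sum_congr rfl hsh, sum_poly_split k (k + 2) (by omega)]
  simp

lemma tbip2_even (k : ℕ) :
    tbip2 (2 * k + 4) = 8 * SS 2 k + 24 * SS 1 k + 18 * SS 0 k := by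
  rw [tbip2]
  have hdiv : (2 * k + 4 + 2) / 2 = k + 3 := by omega
  rw [hdiv]
  rw [Finset.sum_subset
      (show Finset.Icc 2 (k + 3) ⊆ Finset.range (2 * (k + 4)) by
        intro x hx
        simp only [Finset.mem_Icc] at hx
        simp only [Finset.mem_range]
        omega)
      (fun x _ hx2 => by
        simp only [Finset.mem_Icc, not_and_or, not_le] at hx2
        rw [ep_zero_of_out (show x < 2 ∨ (2 * k + 4 + 2) / 2 < x by omega), mul_zero])]
  rw [sum_double]
  have hsplit : ∀ i ∈ Finset.range (k + 4),
      (2 * i) ^ 2 * ep (2 * k + 4) (2 * i) + (2 * i + 1) ^ 2 * ep (2 * k + 4) (2 * i + 1)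
        = (2 * i + 1) ^ 2 * ep (2 * k + 4) (2 * i + 1) := by
    intro i _
    rw [ep_even_even (by omega) (by omega), mul_zero, zero_add]
  rw [Finset.sum_congr rfl hsplit, Finset.sum_range_succ']
  have hterm : ∀ i ∈ Finset.range (k + 3),
      (2 * (i + 1) + 1) ^ 2 * ep (2 * k + 4) (2 * (i + 1) + 1)
        = (8 * i ^ 2 + 24 * i + 18) * 2 ^ i * gd k i := by
    intro i _
    rcases le_or_gt (2 * (i + 1) + 1) (k + 3) with h | h
    · rw [ep_even_val k (i + 1) (by omega) h]
      have : i + 1 - 1 = i := rfl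
      rw [this]
      ring
    · rw [ep_zero_of_out (Or.inr (show (2 * k + 4 + 2) / 2 < 2 * (i + 1) + 1 by omega)),
        gd_zero (by omega) (by omega)]
      simp
  rw [Finset.sum_congr rfl hterm, sum_poly_split k (k + 3) (by omega)]
  rw [ep_zero_of_out (Or.inl (by omega))]
  simp

theorem tbip2_closed_formula (c : ℕ) (hc : 3 ≤ c) :
    (tbip2 c : ℚ) =
      if Odd c then
        ((6 * (c : ℚ) ^ 2 + 36 * c + 14) * 2 ^ ((c - 1) / 2)
          - (24 * (c : ℚ) ^ 2 + 24 * c + 8) * (-1 : ℚ) ^ ((c - 1) / 2)) / 81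
      else
        ((3 * (c : ℚ) ^ 2 + 30 * c + 43) * 2 ^ (c / 2)
          + (24 * (c : ℚ) ^ 2 + 48 * c + 38) * (-1 : ℚ) ^ (c / 2)) / 81 := by
  rcases Nat.even_or_odd c with hpar | hpar
  · obtain ⟨k, rfl⟩ : ∃ k, c = 2 * k + 4 := by
      obtain ⟨m, hm⟩ := hpar
      exact ⟨m - 2, by omega⟩
    rw [if_neg (by rintro ⟨j, hj⟩; omega)]
    have e : (2 * k + 4) / 2 = k + 2 := by omega
    rw [e, tbip2_even k]
    obtain ⟨g0, g1, g2⟩ := SS_closed k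
    rw [eq_div_iff (by norm_num : (81 : ℚ) ≠ 0)]
    push_cast
    push_cast at g0 g1 g2
    linear_combination 8 * g2 + 24 * g1 + 18 * g0
  · obtain ⟨k, rfl⟩ : ∃ k, c = 2 * k + 3 := by
      obtain ⟨m, hm⟩ := hpar
      exact ⟨m - 1, by omega⟩
    rw [if_pos ⟨k + 1, by ring⟩]
    have e : (2 * k + 3 - 1) / 2 = k + 1 := by omega
    rw [e, tbip2_odd k]
    obtain ⟨g0, g1, g2⟩ := SS_closed k
    rw [eq_div_iff (by norm_num : (81 : ℚ) ≠ 0)]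
    push_cast
    push_cast at g0 g1 g2
    linear_combination 8 * g2 + 16 * g1 + 8 * g0
end
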